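/- arXiv:0902.2238 — 5 statements merged into one kernel-verified Lean document; each statement's English description precedes it below -/
import Mathlib

section
/- Let G be a finite group and N a normal subgroup of G such that G/N is cyclic, generated by the coset aN for some a ∈ G. Let π be a set of prime numbers containing every prime divisor of the index [G:N]. Then the number of conjugacy classes of G that consist of π-elements and are contained in the coset aN is equal to the number of conjugacy classes of π-elements of N that are invariant under conjugation by every element of G. -/
/-- A `π`-element: every prime divisor of the order of `g` lies in `π`. -/
def IsPiElement {G : Type*} [Monoid G] (π : Set ℕ) (g : G) : Prop :=
  ∀ p : ℕ, p.Prime → p ∣ orderOf g → p ∈ π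

namespace Stmt0

/-- A `π'`-element. -/
def IsPiCo {G : Type*} [Monoid G] (π : Set ℕ) (g : G) : Prop :=
  ∀ p : ℕ, p.Prime → p ∣ orderOf g → p ∉ π

open Classical in
/-- π-part of a natural number. -/
noncomputable def pi1 (π : Set ℕ) (m : ℕ) : ℕ :=
  ∏ p ∈ m.primeFactors.filter (fun p => p ∈ π), p ^ m.factorization p

open Classical in
/-- π'-part of a natural number. -/
noncomputable def pi2 (π : Set ℕ) (m : ℕ) : ℕ :=
  ∏ p ∈ m.primeFactors.filter (fun p => p ∉ π), p ^ m.factorization p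

theorem pi1_mul_pi2 (π : Set ℕ) {m : ℕ} (hm : m ≠ 0) : pi1 π m * pi2 π m = m := by
  classical
  rw [pi1, pi2, Finset.prod_filter_mul_prod_filter_not]
  conv_rhs => rw [← Nat.factorization_prod_pow_eq_self hm]
  rfl

theorem prime_dvd_pi1 {π : Set ℕ} {p m : ℕ} (hp : p.Prime) (h : p ∣ pi1 π m) : p ∈ π := by
  classical
  obtain ⟨q, hq, hd⟩ := hp.prime.exists_mem_finset_dvd h
  obtain ⟨hq1, hq2⟩ := Finset.mem_filter.mp hq
  have : p = q :=
    (Nat.prime_dvd_prime_iff_eq hp (Nat.prime_of_mem_primeFactors hq1)).mp (hp.dvd_of_dvd_pow hd)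
  exact this ▸ hq2

theorem prime_dvd_pi2 {π : Set ℕ} {p m : ℕ} (hp : p.Prime) (h : p ∣ pi2 π m) : p ∉ π := by
  classical
  obtain ⟨q, hq, hd⟩ := hp.prime.exists_mem_finset_dvd h
  obtain ⟨hq1, hq2⟩ := Finset.mem_filter.mp hq
  have : p = q :=
    (Nat.prime_dvd_prime_iff_eq hp (Nat.prime_of_mem_primeFactors hq1)).mp (hp.dvd_of_dvd_pow hd)
  exact this ▸ hq2

theorem coprime_of_pi {π : Set ℕ} {x y : ℕ} (h1 : ∀ p, p.Prime → p ∣ x → p ∈ π)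
    (h2 : ∀ p, p.Prime → p ∣ y → p ∉ π) : Nat.Coprime x y := by
  by_contra h
  obtain ⟨p, hp, hx, hy⟩ := Nat.Prime.not_coprime_iff_dvd.mp h
  exact h2 p hp hy (h1 p hp hx)

theorem pi1_coprime_pi2 (π : Set ℕ) (m : ℕ) : Nat.Coprime (pi1 π m) (pi2 π m) :=
  coprime_of_pi (fun _ hp h => prime_dvd_pi1 hp h) (fun _ hp h => prime_dvd_pi2 hp h)

/-- The CRT exponent: `kk ≡ 1 mod π`-part, `kk ≡ 0 mod π'`-part. -/
noncomputable def kk (π : Set ℕ) (m : ℕ) : ℕ :=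
  (Nat.chineseRemainder (pi1_coprime_pi2 π m) 1 0).1

theorem kk_mod1 (π : Set ℕ) (m : ℕ) : kk π m ≡ 1 [MOD pi1 π m] :=
  (Nat.chineseRemainder (pi1_coprime_pi2 π m) 1 0).2.1

theorem pi2_dvd_kk (π : Set ℕ) (m : ℕ) : pi2 π m ∣ kk π m :=
  (Nat.modEq_zero_iff_dvd).mp (Nat.chineseRemainder (pi1_coprime_pi2 π m) 1 0).2.2

theorem pi1_eq {π : Set ℕ} {m₁ m₂ : ℕ} (h0 : m₁ * m₂ ≠ 0)
    (h1 : ∀ p, p.Prime → p ∣ m₁ → p ∈ π) (h2 : ∀ p, p.Prime → p ∣ m₂ → p ∉ π) :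
    pi1 π (m₁ * m₂) = m₁ := by
  have hmul := pi1_mul_pi2 π h0
  have d1 : pi1 π (m₁ * m₂) ∣ m₁ := by
    refine (coprime_of_pi (fun p hp h => prime_dvd_pi1 hp h) h2).dvd_of_dvd_mul_right ?_
    exact ⟨pi2 π (m₁ * m₂), hmul.symm⟩
  have d2 : m₁ ∣ pi1 π (m₁ * m₂) := by
    refine (coprime_of_pi h1 (fun p hp h => prime_dvd_pi2 (m := m₁ * m₂) hp h)).dvd_of_dvd_mul_right ?_
    rw [hmul]; exact Dvd.intro m₂ rfl
  exact Nat.dvd_antisymm d1 d2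

theorem pi2_eq {π : Set ℕ} {m₁ m₂ : ℕ} (h0 : m₁ * m₂ ≠ 0)
    (h1 : ∀ p, p.Prime → p ∣ m₁ → p ∈ π) (h2 : ∀ p, p.Prime → p ∣ m₂ → p ∉ π) :
    pi2 π (m₁ * m₂) = m₂ := by
  have hmul := pi1_mul_pi2 π h0
  rw [pi1_eq h0 h1 h2] at hmul
  have hm1 : m₁ ≠ 0 := left_ne_zero_of_mul h0
  exact Nat.eq_of_mul_eq_mul_left (Nat.pos_of_ne_zero hm1) hmul


set_option linter.unusedSectionVars false

section Grp

variable {G : Type*} [Group G] [Finite G]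

theorem ord_ne_zero (g : G) : orderOf g ≠ 0 := (orderOf_pos g).ne'

/-- π-part of a group element. -/
noncomputable def pp (π : Set ℕ) (g : G) : G := g ^ kk π (orderOf g)

/-- π'-part of a group element. -/
noncomputable def cp (π : Set ℕ) (g : G) : G := g * (pp π g)⁻¹

theorem commute_pp (π : Set ℕ) (g : G) : Commute g (pp π g) := (Commute.refl g).pow_right _

theorem commute_pp_cp (π : Set ℕ) (g : G) : Commute (pp π g) (cp π g) :=
  ((commute_pp π g).symm).mul_right ((Commute.refl _).inv_right)

theorem pp_mul_cp (π : Set ℕ) (g : G) : pp π g * cp π g = g := by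
  rw [cp, ← mul_assoc, ← (commute_pp π g).eq, mul_assoc, mul_inv_cancel, mul_one]

theorem pp_mem {N : Subgroup G} {π : Set ℕ} {g : G} (hg : g ∈ N) : pp π g ∈ N :=
  N.pow_mem hg _

theorem isPi_pp (π : Set ℕ) (g : G) : IsPiElement π (pp π g) := by
  have h : orderOf (pp π g) ∣ pi1 π (orderOf g) := by
    apply orderOf_dvd_of_pow_eq_one
    rw [pp, ← pow_mul, ← orderOf_dvd_iff_pow_eq_one]
    conv_lhs => rw [← pi1_mul_pi2 π (ord_ne_zero g)]
    rw [mul_comm (pi1 π (orderOf g))]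
    exact Nat.mul_dvd_mul_right (pi2_dvd_kk π (orderOf g)) _
  exact fun p hp hd => prime_dvd_pi1 hp (hd.trans h)

theorem isPiCo_cp (π : Set ℕ) (g : G) : IsPiCo π (cp π g) := by
  have h : orderOf (cp π g) ∣ pi2 π (orderOf g) := by
    apply orderOf_dvd_of_pow_eq_one
    have hcomm : Commute g ((pp π g)⁻¹) := (commute_pp π g).inv_right
    rw [cp, hcomm.mul_pow, pp, inv_pow, ← pow_mul]
    have key : g ^ (kk π (orderOf g) * pi2 π (orderOf g)) = g ^ (pi2 π (orderOf g)) := by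
      rw [pow_eq_pow_iff_modEq]
      have h1 : kk π (orderOf g) * pi2 π (orderOf g) ≡ 1 * pi2 π (orderOf g)
          [MOD pi1 π (orderOf g) * pi2 π (orderOf g)] :=
        (kk_mod1 π (orderOf g)).mul_right' _
      rwa [one_mul, pi1_mul_pi2 π (ord_ne_zero g)] at h1
    rw [key, mul_inv_cancel]
  exact fun p hp hd => prime_dvd_pi2 hp (hd.trans h)

theorem pp_eq (π : Set ℕ) {s t : G} (hc : Commute s t) (hs : IsPiElement π s)
    (ht : IsPiCo π t) : pp π (s * t) = s := by
  have hcop : Nat.Coprime (orderOf s) (orderOf t) := coprime_of_pi hs ht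
  have hm : orderOf (s * t) = orderOf s * orderOf t :=
    hc.orderOf_mul_eq_mul_orderOf_of_coprime hcop
  have h0 : orderOf s * orderOf t ≠ 0 := Nat.mul_ne_zero (ord_ne_zero s) (ord_ne_zero t)
  have hA : pi1 π (orderOf (s * t)) = orderOf s := by rw [hm]; exact pi1_eq h0 hs ht
  have hB : pi2 π (orderOf (s * t)) = orderOf t := by rw [hm]; exact pi2_eq h0 hs ht
  rw [pp, hc.mul_pow]
  have h1 : s ^ kk π (orderOf (s * t)) = s := by
    conv_rhs => rw [← pow_one s]
    rw [pow_eq_pow_iff_modEq]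
    exact Nat.ModEq.of_dvd (dvd_of_eq hA.symm) (kk_mod1 π _)
  have h2 : t ^ kk π (orderOf (s * t)) = 1 :=
    orderOf_dvd_iff_pow_eq_one.mp (hB ▸ pi2_dvd_kk π (orderOf (s * t)))
  rw [h1, h2, mul_one]

theorem cp_eq (π : Set ℕ) {s t : G} (hc : Commute s t) (hs : IsPiElement π s)
    (ht : IsPiCo π t) : cp π (s * t) = t := by
  rw [cp, pp_eq π hc hs ht, hc.eq, mul_inv_cancel_right]

variable (N : Subgroup G) [N.Normal]

theorem mk_pp (π : Set ℕ) (hπ : ∀ p : ℕ, p.Prime → p ∣ N.index → p ∈ π) (g : G) :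
    (QuotientGroup.mk (pp π g) : G ⧸ N) = QuotientGroup.mk g := by
  set q : G ⧸ N := QuotientGroup.mk g with hq
  have hd : orderOf q ∣ orderOf g := orderOf_map_dvd (QuotientGroup.mk' N) g
  have hqpi : ∀ p, p.Prime → p ∣ orderOf q → p ∈ π := by
    intro p hp h
    refine hπ p hp (h.trans ?_)
    rw [Subgroup.index_eq_card]
    exact orderOf_dvd_natCard q
  have hdvd1 : orderOf q ∣ pi1 π (orderOf g) := by
    have hd' := hd
    rw [← pi1_mul_pi2 π (ord_ne_zero g)] at hd'
    exact (coprime_of_pi hqpi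
      (fun p hp h => prime_dvd_pi2 (m := orderOf g) hp h)).dvd_of_dvd_mul_right hd'
  have hkey : q ^ kk π (orderOf g) = q := by
    conv_rhs => rw [← pow_one q]
    rw [pow_eq_pow_iff_modEq]
    exact Nat.ModEq.of_dvd hdvd1 (kk_mod1 π _)
  rw [pp, QuotientGroup.mk_pow]
  exact hkey

theorem cp_mem (π : Set ℕ) (hπ : ∀ p : ℕ, p.Prime → p ∣ N.index → p ∈ π) (g : G) :
    cp π g ∈ N := by
  rw [← QuotientGroup.eq_one_iff, cp, QuotientGroup.mk_mul, QuotientGroup.mk_inv,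
    mk_pp N π hπ g, mul_inv_cancel]

end Grp

section Conj

variable {G : Type*} [Group G]

theorem orderOf_conj (c g : G) : orderOf (c * g * c⁻¹) = orderOf g := by
  have := (MulAut.conj c).orderOf_eq g
  simpa [MulAut.conj_apply] using this

theorem isPi_conj {π : Set ℕ} {g : G} (h : IsPiElement π g) (c : G) :
    IsPiElement π (c * g * c⁻¹) := fun p hp hd => h p hp (by rwa [orderOf_conj] at hd)

theorem conj_coset {N : Subgroup G} [N.Normal] {a g : G} (h : a⁻¹ * g ∈ N) {n : G}
    (hn : n ∈ N) : a⁻¹ * (n * g * n⁻¹) ∈ N := by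
  rw [← QuotientGroup.eq] at h ⊢
  have h1 : (QuotientGroup.mk n : G ⧸ N) = 1 := (QuotientGroup.eq_one_iff n).mpr hn
  rw [QuotientGroup.mk_mul, QuotientGroup.mk_mul, QuotientGroup.mk_inv, h1, one_mul,
    inv_one, mul_one, ← h]

end Conj


section Main

variable {G : Type*} [Group G] [Finite G]

theorem commute_of_conj {c g : G} (h : c * g * c⁻¹ = g) : Commute c g := by
  have h2 : c * g = g * c := by
    conv_rhs => rw [← h]
    rw [inv_mul_cancel_right]
  exact h2

theorem conj_eq_of_commute {c g : G} (h : Commute c g) : c * g * c⁻¹ = g := by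
  rw [h.eq, mul_inv_cancel_right]

theorem commute_conj {b x c : G} (h : Commute b x) :
    Commute (c * b * c⁻¹) (c * x * c⁻¹) := by
  have := h.map (MulAut.conj c).toMonoidHom
  simpa [MulAut.conj_apply] using this

variable (N : Subgroup G) (π : Set ℕ) (a : G)

abbrev Om1 : Type _ := {g : G // a⁻¹ * g ∈ N ∧ IsPiElement π g}

abbrev Om2 : Type _ :=
  {x : G // x ∈ N ∧ IsPiElement π x ∧ ∃ b : G, a⁻¹ * b ∈ N ∧ Commute b x}

variable [N.Normal]

theorem memN_mul {b t : G} (h1 : a⁻¹ * b ∈ N) (h2 : t ∈ N) : a⁻¹ * (b * t) ∈ N := by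
  rw [← mul_assoc]; exact mul_mem h1 h2

theorem memN_inv_mul {c d : G} (h1 : a⁻¹ * c ∈ N) (h2 : a⁻¹ * d ∈ N) : c⁻¹ * d ∈ N := by
  have h := mul_mem (inv_mem h1) h2
  rwa [mul_inv_rev, inv_inv, mul_assoc, mul_inv_cancel_left] at h

instance : SMul N (Om1 N π a) where
  smul n g := ⟨(n : G) * g.1 * (n : G)⁻¹, conj_coset g.2.1 n.2, isPi_conj g.2.2 _⟩

@[simp] theorem om1_smul_coe (n : N) (g : Om1 N π a) :
    ((n • g : Om1 N π a) : G) = (n : G) * (g : G) * (n : G)⁻¹ := rfl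

instance : MulAction N (Om1 N π a) where
  one_smul g := Subtype.ext (by simp)
  mul_smul n m g := Subtype.ext (by simp [mul_assoc])

instance : SMul N (Om2 N π a) where
  smul n x :=
    ⟨(n : G) * x.1 * (n : G)⁻¹,
      mul_mem (mul_mem n.2 x.2.1) (inv_mem n.2),
      isPi_conj x.2.2.1 _,
      by
        obtain ⟨b, hb1, hb2⟩ := x.2.2.2
        exact ⟨(n : G) * b * (n : G)⁻¹, conj_coset hb1 n.2, commute_conj hb2⟩⟩

@[simp] theorem om2_smul_coe (n : N) (x : Om2 N π a) :
    ((n • x : Om2 N π a) : G) = (n : G) * (x : G) * (n : G)⁻¹ := rfl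

instance : MulAction N (Om2 N π a) where
  one_smul x := Subtype.ext (by simp)
  mul_smul n m x := Subtype.ext (by simp [mul_assoc])

open Classical in
/-- choice of an element of `aN` commuting with `x`, when one exists -/
noncomputable def bch (x : G) : G :=
  if h : ∃ b : G, a⁻¹ * b ∈ N ∧ Commute b x then Classical.choose h else 1

theorem bch_spec {x : G} (h : ∃ b : G, a⁻¹ * b ∈ N ∧ Commute b x) :
    a⁻¹ * bch N a x ∈ N ∧ Commute (bch N a x) x := by
  rw [bch, dif_pos h]; exact Classical.choose_spec h

variable {N π a}

section Maps

theorem P1_commute (P : {p : N × Om1 N π a // p.1 • p.2 = p.2}) :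
    Commute ((P.1.1 : G)) ((P.1.2 : G)) :=
  commute_of_conj (congrArg Subtype.val P.2)

theorem gt_commute (P : {p : N × Om1 N π a // p.1 • p.2 = p.2}) :
    Commute ((P.1.2 : G) * cp π (P.1.1 : G)) (pp π (P.1.1 : G)) :=
  Commute.mul_left ((P1_commute P).symm.pow_right _) (commute_pp_cp π _).symm

theorem gt_commute' (P : {p : N × Om1 N π a // p.1 • p.2 = p.2}) :
    Commute ((P.1.2 : G)) (cp π (P.1.1 : G)) :=
  ((P1_commute P).symm).mul_right (((P1_commute P).symm.pow_right _).inv_right)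

theorem F_exists (hπ : ∀ p : ℕ, p.Prime → p ∣ N.index → p ∈ π)
    (P : {p : N × Om1 N π a // p.1 • p.2 = p.2}) :
    ∃ b : G, a⁻¹ * b ∈ N ∧ Commute b (pp π (P.1.1 : G)) :=
  ⟨(P.1.2 : G) * cp π (P.1.1 : G),
    memN_mul N a P.1.2.2.1 (cp_mem N π hπ _), gt_commute P⟩

/-- forward map -/
noncomputable def Fm (hπ : ∀ p : ℕ, p.Prime → p ∣ N.index → p ∈ π)
    (P : {p : N × Om1 N π a // p.1 • p.2 = p.2}) :
    {p : N × Om2 N π a // p.1 • p.2 = p.2} :=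
  ⟨(⟨(bch N a (pp π (P.1.1 : G)))⁻¹ * ((P.1.2 : G) * cp π (P.1.1 : G)),
      memN_inv_mul N a (bch_spec N a (F_exists hπ P)).1
        (memN_mul N a P.1.2.2.1 (cp_mem N π hπ _))⟩,
    ⟨pp π (P.1.1 : G), pp_mem P.1.1.2, isPi_pp π _, F_exists hπ P⟩),
    Subtype.ext (conj_eq_of_commute
      (Commute.mul_left ((bch_spec N a (F_exists hπ P)).2.inv_left) (gt_commute P)))⟩

theorem Q_commute (Q : {p : N × Om2 N π a // p.1 • p.2 = p.2}) :
    Commute ((Q.1.1 : G)) ((Q.1.2 : G)) :=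
  commute_of_conj (congrArg Subtype.val Q.2)

theorem B_bcomm (Q : {p : N × Om2 N π a // p.1 • p.2 = p.2}) :
    Commute (bch N a (Q.1.2 : G) * (Q.1.1 : G)) ((Q.1.2 : G)) :=
  Commute.mul_left (bch_spec N a Q.1.2.2.2.2).2 (Q_commute Q)

theorem B_bmem (Q : {p : N × Om2 N π a // p.1 • p.2 = p.2}) :
    a⁻¹ * (bch N a (Q.1.2 : G) * (Q.1.1 : G)) ∈ N :=
  memN_mul N a (bch_spec N a Q.1.2.2.2.2).1 Q.1.1.2

theorem B_g_mem (hπ : ∀ p : ℕ, p.Prime → p ∣ N.index → p ∈ π) (Q : {p : N × Om2 N π a // p.1 • p.2 = p.2}) :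
    a⁻¹ * pp π (bch N a (Q.1.2 : G) * (Q.1.1 : G)) ∈ N := by
  rw [← QuotientGroup.eq, mk_pp N π hπ]
  exact QuotientGroup.eq.mpr (B_bmem Q)

theorem B_xcomm (Q : {p : N × Om2 N π a // p.1 • p.2 = p.2}) :
    Commute ((Q.1.2 : G)) (cp π (bch N a (Q.1.2 : G) * (Q.1.1 : G))) :=
  (B_bcomm Q).symm.mul_right (((B_bcomm Q).symm.pow_right _).inv_right)

/-- backward map -/
noncomputable def Bm (hπ : ∀ p : ℕ, p.Prime → p ∣ N.index → p ∈ π)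
    (Q : {p : N × Om2 N π a // p.1 • p.2 = p.2}) :
    {p : N × Om1 N π a // p.1 • p.2 = p.2} :=
  ⟨(⟨(Q.1.2 : G) * cp π (bch N a (Q.1.2 : G) * (Q.1.1 : G)),
      mul_mem Q.1.2.2.1 (cp_mem N π hπ _)⟩,
    ⟨pp π (bch N a (Q.1.2 : G) * (Q.1.1 : G)), B_g_mem hπ Q, isPi_pp π _⟩),
    Subtype.ext (conj_eq_of_commute
      (Commute.mul_left
        (show Commute ((Q.1.2 : G)) (pp π (bch N a (Q.1.2 : G) * (Q.1.1 : G))) from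
          (B_bcomm Q).symm.pow_right _)
        (commute_pp_cp π _).symm))⟩

theorem Bm_Fm (hπ : ∀ p : ℕ, p.Prime → p ∣ N.index → p ∈ π)
    (P : {p : N × Om1 N π a // p.1 • p.2 = p.2}) : Bm hπ (Fm hπ P) = P := by
  obtain ⟨⟨n, g⟩, hP⟩ := P
  have hgt : Commute (g : G) (cp π (n : G)) := gt_commute' ⟨(n, g), hP⟩
  have hb' : bch N a (pp π (n : G)) * ((bch N a (pp π (n : G)))⁻¹ * ((g : G) * cp π (n : G)))
      = (g : G) * cp π (n : G) := mul_inv_cancel_left _ _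
  have hppb : pp π ((g : G) * cp π (n : G)) = (g : G) := pp_eq π hgt g.2.2 (isPiCo_cp π _)
  have hcpb : cp π ((g : G) * cp π (n : G)) = cp π (n : G) := cp_eq π hgt g.2.2 (isPiCo_cp π _)
  refine Subtype.ext (Prod.ext (Subtype.ext ?_) (Subtype.ext ?_))
  · show (pp π (n : G)) * cp π (bch N a (pp π (n : G)) *
      ((bch N a (pp π (n : G)))⁻¹ * ((g : G) * cp π (n : G)))) = (n : G)
    rw [hb', hcpb, pp_mul_cp]
  · show pp π (bch N a (pp π (n : G)) *
      ((bch N a (pp π (n : G)))⁻¹ * ((g : G) * cp π (n : G)))) = (g : G)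
    rw [hb', hppb]

theorem Fm_Bm (hπ : ∀ p : ℕ, p.Prime → p ∣ N.index → p ∈ π)
    (Q : {p : N × Om2 N π a // p.1 • p.2 = p.2}) : Fm hπ (Bm hπ Q) = Q := by
  obtain ⟨⟨m, x⟩, hQ⟩ := Q
  have hxt : Commute ((x : G)) (cp π (bch N a (x : G) * (m : G))) := B_xcomm ⟨(m, x), hQ⟩
  have hx_new : pp π ((x : G) * cp π (bch N a (x : G) * (m : G))) = (x : G) :=
    pp_eq π hxt x.2.2.1 (isPiCo_cp π _)
  have hcp_new : cp π ((x : G) * cp π (bch N a (x : G) * (m : G)))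
      = cp π (bch N a (x : G) * (m : G)) := cp_eq π hxt x.2.2.1 (isPiCo_cp π _)
  refine Subtype.ext (Prod.ext (Subtype.ext ?_) (Subtype.ext ?_))
  · show (bch N a (pp π ((x : G) * cp π (bch N a (x : G) * (m : G)))))⁻¹ *
      (pp π (bch N a (x : G) * (m : G)) * cp π ((x : G) * cp π (bch N a (x : G) * (m : G))))
      = (m : G)
    rw [hcp_new, pp_mul_cp, hx_new, inv_mul_cancel_left]
  · show pp π ((x : G) * cp π (bch N a (x : G) * (m : G))) = (x : G)
    exact hx_new

end Maps

end Main

end Stmt0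

open Stmt0 in
/-- Lemma 2.2(2): if `G/N` is cyclic generated by `aN` and `π` contains all prime
divisors of `[G:N]`, then the number of conjugacy classes of `π`-elements of `G`
contained in the coset `aN` equals the number of `G`-invariant conjugacy classes of
`π`-elements of `N`. -/
theorem stmt_0 {G : Type*} [Group G] [Finite G] (N : Subgroup G) [N.Normal]
    (π : Set ℕ) (a : G)
    (hgen : ∀ x : G ⧸ N, x ∈ Subgroup.zpowers (QuotientGroup.mk a : G ⧸ N))
    (hπ : ∀ p : ℕ, p.Prime → p ∣ N.index → p ∈ π) :
    Nat.card {c : ConjClasses G //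
        (∀ g ∈ c.carrier, IsPiElement π g) ∧ c.carrier ⊆ {g : G | a⁻¹ * g ∈ N}} =
    Nat.card {c : ConjClasses N //
        (∀ x ∈ c.carrier, IsPiElement π x) ∧
        ∀ g : G, ∀ x : N, x ∈ c.carrier →
          ∀ y : N, (y : G) = g * (x : G) * g⁻¹ → y ∈ c.carrier} := by
  classical
  have hcomm : ∀ x y : G ⧸ N, x * y = y * x := by
    intro x y
    obtain ⟨i, hi⟩ := Subgroup.mem_zpowers_iff.mp (hgen x)
    obtain ⟨j, hj⟩ := Subgroup.mem_zpowers_iff.mp (hgen y)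
    rw [← hi, ← hj, ← zpow_add, ← zpow_add, add_comm]
  have hconj_coset : ∀ {g : G}, a⁻¹ * g ∈ N → ∀ c : G, a⁻¹ * (c * g * c⁻¹) ∈ N := by
    intro g hg c
    rw [← QuotientGroup.eq] at hg ⊢
    rw [QuotientGroup.mk_mul, QuotientGroup.mk_mul, QuotientGroup.mk_inv,
      hcomm (QuotientGroup.mk c) (QuotientGroup.mk g), mul_inv_cancel_right]
    exact hg
  have hdecomp : ∀ {b : G}, a⁻¹ * b ∈ N → ∀ c : G, ∃ ν, ν ∈ N ∧ ∃ j : ℤ, c = ν * b ^ j := by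
    intro b hb c
    obtain ⟨j, hj⟩ := Subgroup.mem_zpowers_iff.mp (hgen (QuotientGroup.mk c))
    refine ⟨c * (b ^ j)⁻¹, ?_, j, by group⟩
    rw [← QuotientGroup.eq_one_iff, QuotientGroup.mk_mul, QuotientGroup.mk_inv,
      QuotientGroup.mk_zpow, ← QuotientGroup.eq.mpr hb, hj, mul_inv_cancel]
  -- Step 1 : count for the coset side
  have count1 : Nat.card {p : N × Om1 N π a // p.1 • p.2 = p.2}
      = Nat.card {c : ConjClasses G //
          (∀ g ∈ c.carrier, IsPiElement π g) ∧ c.carrier ⊆ {g : G | a⁻¹ * g ∈ N}}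
        * Nat.card N := by
    have e1 : {p : N × Om1 N π a // p.1 • p.2 = p.2}
        ≃ Quotient (MulAction.orbitRel N (Om1 N π a)) × N :=
      (Equiv.subtypeProdEquivSigmaSubtype (fun (n : N) (x : Om1 N π a) => n • x = x)).trans
        (MulAction.sigmaFixedByEquivOrbitsProdGroup N (Om1 N π a))
    have hf1 : ∀ g : Om1 N π a, ∀ h ∈ (ConjClasses.mk (g : G)).carrier, IsPiElement π h := by
      intro g h hh
      rw [ConjClasses.mem_carrier_iff_mk_eq, ConjClasses.mk_eq_mk_iff_isConj] at hh
      obtain ⟨cu, hcu⟩ := isConj_iff.mp hh.symm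
      rw [← hcu]
      exact isPi_conj g.2.2 cu
    have hf2 : ∀ g : Om1 N π a,
        (ConjClasses.mk (g : G)).carrier ⊆ {g : G | a⁻¹ * g ∈ N} := by
      intro g h hh
      rw [ConjClasses.mem_carrier_iff_mk_eq, ConjClasses.mk_eq_mk_iff_isConj] at hh
      obtain ⟨cu, hcu⟩ := isConj_iff.mp hh.symm
      show a⁻¹ * h ∈ N
      rw [← hcu]
      exact hconj_coset g.2.1 cu
    have hresp : ∀ g₁ g₂ : Om1 N π a, MulAction.orbitRel N (Om1 N π a) g₁ g₂ →
        (⟨ConjClasses.mk (g₁ : G), hf1 g₁, hf2 g₁⟩ :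
          {c : ConjClasses G //
            (∀ g ∈ c.carrier, IsPiElement π g) ∧ c.carrier ⊆ {g : G | a⁻¹ * g ∈ N}})
        = ⟨ConjClasses.mk (g₂ : G), hf1 g₂, hf2 g₂⟩ := by
      intro g₁ g₂ hrel
      obtain ⟨nn, hnn⟩ := MulAction.mem_orbit_iff.mp (MulAction.orbitRel_apply.mp hrel)
      have hval : ((nn : G)) * (g₂ : G) * (nn : G)⁻¹ = (g₁ : G) := congrArg Subtype.val hnn
      refine Subtype.ext ?_
      show ConjClasses.mk (g₁ : G) = ConjClasses.mk (g₂ : G)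
      rw [ConjClasses.mk_eq_mk_iff_isConj]
      exact (isConj_iff.mpr ⟨(nn : G), hval⟩).symm
    have e2 : Quotient (MulAction.orbitRel N (Om1 N π a))
        ≃ {c : ConjClasses G //
            (∀ g ∈ c.carrier, IsPiElement π g) ∧ c.carrier ⊆ {g : G | a⁻¹ * g ∈ N}} := by
      letI : Setoid (Om1 N π a) := MulAction.orbitRel N (Om1 N π a)
      refine Equiv.ofBijective
        (Quotient.lift (fun (g : Om1 N π a) =>
          (⟨ConjClasses.mk (g : G), hf1 g, hf2 g⟩ :
            {c : ConjClasses G //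
              (∀ g ∈ c.carrier, IsPiElement π g) ∧ c.carrier ⊆ {g : G | a⁻¹ * g ∈ N}}))
          hresp) ⟨?_, ?_⟩
      · intro q₁ q₂ hq
        obtain ⟨g₁, rfl⟩ := Quotient.exists_rep q₁
        obtain ⟨g₂, rfl⟩ := Quotient.exists_rep q₂
        have hconj : IsConj (g₁ : G) (g₂ : G) := by
          have h' := congrArg Subtype.val hq
          simpa [ConjClasses.mk_eq_mk_iff_isConj] using h'
        obtain ⟨cu, hcu⟩ := isConj_iff.mp hconj
        obtain ⟨ν, hν, j, rfl⟩ := hdecomp g₁.2.1 cu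
        have hval : ν * (g₁ : G) * ν⁻¹ = (g₂ : G) := by
          rw [← hcu]; group
        apply Quotient.sound
        exact Setoid.symm (MulAction.orbitRel_apply.mpr
          (MulAction.mem_orbit_iff.mpr ⟨⟨ν, hν⟩, Subtype.ext hval⟩))
      · rintro ⟨c, hc1, hc2⟩
        obtain ⟨g0, hg0⟩ := ConjClasses.exists_rep c
        have hmem : g0 ∈ c.carrier := ConjClasses.mem_carrier_iff_mk_eq.mpr hg0
        exact ⟨Quotient.mk (MulAction.orbitRel N (Om1 N π a))
          (⟨g0, hc2 hmem, hc1 g0 hmem⟩ : Om1 N π a), Subtype.ext hg0⟩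
    rw [Nat.card_congr e1, Nat.card_prod, Nat.card_congr e2]
  -- Step 2 : count for the invariant-classes side
  have count2 : Nat.card {p : N × Om2 N π a // p.1 • p.2 = p.2}
      = Nat.card {c : ConjClasses N //
          (∀ x ∈ c.carrier, IsPiElement π x) ∧
          ∀ g : G, ∀ x : N, x ∈ c.carrier →
            ∀ y : N, (y : G) = g * (x : G) * g⁻¹ → y ∈ c.carrier} * Nat.card N := by
    have e1 : {p : N × Om2 N π a // p.1 • p.2 = p.2}
        ≃ Quotient (MulAction.orbitRel N (Om2 N π a)) × N :=
      (Equiv.subtypeProdEquivSigmaSubtype (fun (n : N) (x : Om2 N π a) => n • x = x)).trans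
        (MulAction.sigmaFixedByEquivOrbitsProdGroup N (Om2 N π a))
    have hf1 : ∀ x : Om2 N π a,
        ∀ x' ∈ (ConjClasses.mk (⟨(x : G), x.2.1⟩ : N)).carrier, IsPiElement π x' := by
      intro x x' hx'
      rw [ConjClasses.mem_carrier_iff_mk_eq, ConjClasses.mk_eq_mk_iff_isConj] at hx'
      obtain ⟨cu, hcu⟩ := isConj_iff.mp hx'.symm
      rw [← hcu]
      exact isPi_conj (fun p hp hd => x.2.2.1 p hp (by rwa [Subgroup.orderOf_mk] at hd)) cu
    have hf2 : ∀ x : Om2 N π a, ∀ g' : G, ∀ x' : N,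
        x' ∈ (ConjClasses.mk (⟨(x : G), x.2.1⟩ : N)).carrier →
        ∀ y : N, (y : G) = g' * (x' : G) * g'⁻¹ →
          y ∈ (ConjClasses.mk (⟨(x : G), x.2.1⟩ : N)).carrier := by
      intro x g' x' hx' y hy
      rw [ConjClasses.mem_carrier_iff_mk_eq, ConjClasses.mk_eq_mk_iff_isConj] at hx'
      obtain ⟨cu, hcu⟩ := isConj_iff.mp hx'.symm
      obtain ⟨b, hb1, hb2⟩ := x.2.2.2
      obtain ⟨ν, hν, j, hdec⟩ := hdecomp hb1 (g' * (cu : G))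
      have hcuG : (cu : G) * (x : G) * (cu : G)⁻¹ = (x' : G) := by
        have h' := congrArg Subtype.val hcu
        simpa using h'
      have hbj : (b ^ j) * (x : G) * (b ^ j)⁻¹ = (x : G) :=
        conj_eq_of_commute (hb2.zpow_left j)
      have hg' : g' = ν * b ^ j * (cu : G)⁻¹ := by rw [← hdec]; group
      have hyν : (y : G) = ν * (x : G) * ν⁻¹ := by
        rw [hy, ← hcuG, hg']
        have expand : (ν * b ^ j * (cu : G)⁻¹) * ((cu : G) * (x : G) * (cu : G)⁻¹) *
            (ν * b ^ j * (cu : G)⁻¹)⁻¹ = ν * ((b ^ j) * (x : G) * (b ^ j)⁻¹) * ν⁻¹ := by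
          group
        rw [expand, hbj]
      have hyy : y = ⟨ν, hν⟩ * (⟨(x : G), x.2.1⟩ : N) * ⟨ν, hν⟩⁻¹ :=
        Subtype.ext (by simpa using hyν)
      rw [ConjClasses.mem_carrier_iff_mk_eq, hyy, ConjClasses.mk_eq_mk_iff_isConj]
      exact (isConj_iff.mpr ⟨(⟨ν, hν⟩ : N), rfl⟩).symm
    have hresp : ∀ x₁ x₂ : Om2 N π a, MulAction.orbitRel N (Om2 N π a) x₁ x₂ →
        (⟨ConjClasses.mk (⟨(x₁ : G), x₁.2.1⟩ : N), hf1 x₁, hf2 x₁⟩ :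
          {c : ConjClasses N //
            (∀ x ∈ c.carrier, IsPiElement π x) ∧
            ∀ g : G, ∀ x : N, x ∈ c.carrier →
              ∀ y : N, (y : G) = g * (x : G) * g⁻¹ → y ∈ c.carrier})
        = ⟨ConjClasses.mk (⟨(x₂ : G), x₂.2.1⟩ : N), hf1 x₂, hf2 x₂⟩ := by
      intro x₁ x₂ hrel
      obtain ⟨nn, hnn⟩ := MulAction.mem_orbit_iff.mp (MulAction.orbitRel_apply.mp hrel)
      have hval : ((nn : G)) * (x₂ : G) * (nn : G)⁻¹ = (x₁ : G) := congrArg Subtype.val hnn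
      refine Subtype.ext ?_
      show ConjClasses.mk (⟨(x₁ : G), x₁.2.1⟩ : N) = ConjClasses.mk (⟨(x₂ : G), x₂.2.1⟩ : N)
      rw [ConjClasses.mk_eq_mk_iff_isConj]
      refine (isConj_iff.mpr ⟨nn, ?_⟩).symm
      exact Subtype.ext (by simpa using hval)
    have e2 : Quotient (MulAction.orbitRel N (Om2 N π a))
        ≃ {c : ConjClasses N //
            (∀ x ∈ c.carrier, IsPiElement π x) ∧
            ∀ g : G, ∀ x : N, x ∈ c.carrier →
              ∀ y : N, (y : G) = g * (x : G) * g⁻¹ → y ∈ c.carrier} := by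
      letI : Setoid (Om2 N π a) := MulAction.orbitRel N (Om2 N π a)
      refine Equiv.ofBijective
        (Quotient.lift (fun (x : Om2 N π a) =>
          (⟨ConjClasses.mk (⟨(x : G), x.2.1⟩ : N), hf1 x, hf2 x⟩ :
            {c : ConjClasses N //
              (∀ x ∈ c.carrier, IsPiElement π x) ∧
              ∀ g : G, ∀ x : N, x ∈ c.carrier →
                ∀ y : N, (y : G) = g * (x : G) * g⁻¹ → y ∈ c.carrier}))
          hresp) ⟨?_, ?_⟩
      · intro q₁ q₂ hq
        obtain ⟨x₁, rfl⟩ := Quotient.exists_rep q₁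
        obtain ⟨x₂, rfl⟩ := Quotient.exists_rep q₂
        have hconj : IsConj (⟨(x₁ : G), x₁.2.1⟩ : N) (⟨(x₂ : G), x₂.2.1⟩ : N) := by
          have h' := congrArg Subtype.val hq
          simpa [ConjClasses.mk_eq_mk_iff_isConj] using h'
        obtain ⟨cu, hcu⟩ := isConj_iff.mp hconj
        have hval : ((cu : G)) * (x₁ : G) * (cu : G)⁻¹ = (x₂ : G) := by
          have h' := congrArg Subtype.val hcu
          simpa using h'
        apply Quotient.sound
        exact Setoid.symm (MulAction.orbitRel_apply.mpr
          (MulAction.mem_orbit_iff.mpr ⟨cu, Subtype.ext hval⟩))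
      · rintro ⟨c, hc1, hc2⟩
        obtain ⟨x0, hx0⟩ := ConjClasses.exists_rep c
        have hmem : x0 ∈ c.carrier := ConjClasses.mem_carrier_iff_mk_eq.mpr hx0
        have hPi : IsPiElement π ((x0 : G)) := fun p hp hd =>
          hc1 x0 hmem p hp (by rwa [Subgroup.orderOf_coe] at hd)
        have hNn : N.Normal := inferInstance
        have hy0 : (a * (x0 : G) * a⁻¹) ∈ N := hNn.conj_mem _ x0.2 a
        have hy0mem : (⟨a * (x0 : G) * a⁻¹, hy0⟩ : N) ∈ c.carrier :=
          hc2 a x0 hmem ⟨a * (x0 : G) * a⁻¹, hy0⟩ rfl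
        have hconj : ConjClasses.mk (⟨a * (x0 : G) * a⁻¹, hy0⟩ : N) = ConjClasses.mk x0 := by
          rw [ConjClasses.mem_carrier_iff_mk_eq] at hy0mem hmem
          rw [hy0mem, hmem]
        obtain ⟨mu, hmu⟩ := isConj_iff.mp (ConjClasses.mk_eq_mk_iff_isConj.mp hconj)
        have hmuG : ((mu : G)) * (a * (x0 : G) * a⁻¹) * (mu : G)⁻¹ = (x0 : G) := by
          have h' := congrArg Subtype.val hmu
          simpa using h'
        have hbx : ((mu : G) * a) * (x0 : G) * ((mu : G) * a)⁻¹ = (x0 : G) := by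
          conv_rhs => rw [← hmuG]
          group
        have hbN : a⁻¹ * ((mu : G) * a) ∈ N := by
          have h' := hNn.conj_mem _ mu.2 a⁻¹
          rwa [inv_inv, mul_assoc] at h'
        refine ⟨Quotient.mk (MulAction.orbitRel N (Om2 N π a))
          (⟨(x0 : G), x0.2, hPi, ⟨(mu : G) * a, hbN, commute_of_conj hbx⟩⟩ : Om2 N π a), ?_⟩
        refine Subtype.ext ?_
        show ConjClasses.mk (⟨(x0 : G), x0.2⟩ : N) = c
        rw [Subtype.coe_eta]
        exact hx0
    rw [Nat.card_congr e1, Nat.card_prod, Nat.card_congr e2]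
  -- Step 3 : the bijection between the two pair sets
  have count3 : Nat.card {p : N × Om1 N π a // p.1 • p.2 = p.2}
      = Nat.card {p : N × Om2 N π a // p.1 • p.2 = p.2} :=
    Nat.card_congr ⟨Fm hπ, Bm hπ, Bm_Fm hπ, Fm_Bm hπ⟩
  rw [count1, count2] at count3
  exact Nat.eq_of_mul_eq_mul_right Nat.card_pos count3
end

section
/- Let G be a finite group, N a normal subgroup of G, and π any set of prime numbers. Then k_π(G) ≤ k_π(G/N) · k_π(N). -/
namespace PiAux

variable {G : Type*} [Group G] (π : Set ℕ)

lemma isPi_of_dvd {a b : G} (h : orderOf a ∣ orderOf b) (hb : IsPiElement π b) :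
    IsPiElement π a := fun p hp hd => hb p hp (hd.trans h)

lemma isPi_inv {a : G} (ha : IsPiElement π a) : IsPiElement π a⁻¹ := by
  intro p hp hd; rw [orderOf_inv] at hd; exact ha p hp hd

lemma isPi_mul {a b : G} (h : Commute a b) (ha : IsPiElement π a) (hb : IsPiElement π b) :
    IsPiElement π (a * b) := by
  intro p hp hd
  have h1 : p ∣ Nat.lcm (orderOf a) (orderOf b) := hd.trans h.orderOf_mul_dvd_lcm
  have h2 : p ∣ orderOf a * orderOf b := h1.trans (Nat.lcm_dvd_mul _ _)
  rcases (Nat.Prime.dvd_mul hp).1 h2 with h3 | h3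
  · exact ha p hp h3
  · exact hb p hp h3

lemma orderOf_conj' (a c : G) : orderOf (c * a * c⁻¹) = orderOf a := by
  refine (SemiconjBy.orderOf_eq c ?_).symm
  show c * a = (c * a * c⁻¹) * c
  group

lemma isPi_conj {a : G} (c : G) (ha : IsPiElement π a) : IsPiElement π (c * a * c⁻¹) := by
  intro p hp hd; rw [orderOf_conj'] at hd; exact ha p hp hd

lemma pi_part [Finite G] (g : G) :
    ∃ a : G, (∃ i, a = g ^ i) ∧ (∃ j, a⁻¹ * g = g ^ j) ∧
      IsPiElement π a ∧ (∀ p, p.Prime → p ∣ orderOf (a⁻¹ * g) → p ∉ π) := by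
  classical
  set n := orderOf g with hn
  have hn0 : n ≠ 0 := (orderOf_pos g).ne'
  set m₁ := n.factorization.prod (fun p k => if p ∈ π then p ^ k else 1) with hm₁
  set m₂ := n.factorization.prod (fun p k => if p ∈ π then 1 else p ^ k) with hm₂
  have hmm : m₁ * m₂ = n := by
    rw [hm₁, hm₂, ← Finsupp.prod_mul]
    have h2 : (n.factorization.prod fun p k =>
        (if p ∈ π then p ^ k else 1) * (if p ∈ π then 1 else p ^ k)) =
        n.factorization.prod fun p k => p ^ k := by
      apply Finsupp.prod_congr
      intro p _
      by_cases h : p ∈ π <;> simp [h]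
    rw [h2, Nat.factorization_prod_pow_eq_self hn0]
  have hm₁0 : m₁ ≠ 0 := fun h => hn0 (by rw [← hmm, h, zero_mul])
  have hm₂0 : m₂ ≠ 0 := fun h => hn0 (by rw [← hmm, h, mul_zero])
  have hprime₁ : ∀ p : ℕ, p.Prime → p ∣ m₁ → p ∈ π := by
    intro p hp hd
    rw [hm₁, Finsupp.prod] at hd
    obtain ⟨q, hq, hdq⟩ := hp.prime.exists_mem_finset_dvd hd
    by_cases h : q ∈ π
    · rw [if_pos h] at hdq
      have hq' : q.Prime := Nat.prime_of_mem_primeFactors (by rwa [Nat.support_factorization] at hq)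
      have : p = q := (Nat.prime_dvd_prime_iff_eq hp hq').1 (hp.dvd_of_dvd_pow hdq)
      rwa [this]
    · rw [if_neg h] at hdq
      exact absurd (Nat.dvd_one.mp hdq) hp.ne_one
  have hprime₂ : ∀ p : ℕ, p.Prime → p ∣ m₂ → p ∉ π := by
    intro p hp hd
    rw [hm₂, Finsupp.prod] at hd
    obtain ⟨q, hq, hdq⟩ := hp.prime.exists_mem_finset_dvd hd
    by_cases h : q ∈ π
    · rw [if_pos h] at hdq
      exact absurd (Nat.dvd_one.mp hdq) hp.ne_one
    · rw [if_neg h] at hdq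
      have hq' : q.Prime := Nat.prime_of_mem_primeFactors (by rwa [Nat.support_factorization] at hq)
      have : p = q := (Nat.prime_dvd_prime_iff_eq hp hq').1 (hp.dvd_of_dvd_pow hdq)
      rwa [this]
  have hcop : Nat.Coprime m₂ m₁ := by
    by_contra hne
    obtain ⟨p, hp, hpd⟩ := Nat.exists_prime_and_dvd hne
    exact hprime₂ p hp (hpd.trans (Nat.gcd_dvd_left _ _))
      (hprime₁ p hp (hpd.trans (Nat.gcd_dvd_right _ _)))
  set t := m₂ ^ m₁.totient with htdef
  have htmod : t ≡ 1 [MOD m₁] := Nat.ModEq.pow_totient hcop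
  have htotpos : 0 < m₁.totient := Nat.totient_pos.mpr (Nat.pos_of_ne_zero hm₁0)
  set j := 1 + (n - 1) * t with hjdef
  have hgn : g ^ n = 1 := by rw [hn]; exact pow_orderOf_eq_one g
  have harith : t + j = 1 + n * t := by
    have h1 : (n - 1) + 1 = n := Nat.succ_pred_eq_of_pos (Nat.pos_of_ne_zero hn0)
    calc t + j = 1 + ((n - 1) + 1) * t := by rw [hjdef]; ring
      _ = 1 + n * t := by rw [h1]
  have hkey : g ^ t * g ^ j = g := by
    rw [← pow_add, harith, pow_add, pow_mul, hgn, one_pow, mul_one, pow_one]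
  have hform : (g ^ t)⁻¹ * g = g ^ j := by
    rw [inv_mul_eq_iff_eq_mul]; exact hkey.symm
  refine ⟨g ^ t, ⟨t, rfl⟩, ⟨j, hform⟩, ?_, ?_⟩
  · -- IsPiElement π (g ^ t)
    intro p hp hd
    apply hprime₁ p hp
    refine hd.trans ?_
    apply orderOf_dvd_of_pow_eq_one
    rw [← pow_mul]
    apply orderOf_dvd_iff_pow_eq_one.1
    rw [← hn, ← hmm]
    refine ⟨m₂ ^ (m₁.totient - 1), ?_⟩
    rw [htdef]
    have h2 : m₁.totient = 1 + (m₁.totient - 1) := by omega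
    calc m₂ ^ m₁.totient * m₁ = m₂ ^ (1 + (m₁.totient - 1)) * m₁ := by rw [← h2]
      _ = m₁ * m₂ * m₂ ^ (m₁.totient - 1) := by rw [pow_add, pow_one]; ring
  · -- pi' part
    intro p hp hd hmem
    have hj : m₁ ∣ j := by
      have h1 : j ≡ 1 + (n - 1) * 1 [MOD m₁] := Nat.ModEq.add_left 1 (Nat.ModEq.mul_left _ htmod)
      have h2 : 1 + (n - 1) * 1 = n := by
        have h3 : 1 ≤ n := Nat.pos_of_ne_zero hn0
        omega
      rw [h2] at h1
      have h3 : j ≡ 0 [MOD m₁] := h1.trans ((Nat.modEq_zero_iff_dvd).2 ⟨m₂, hmm.symm⟩)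
      exact (Nat.modEq_zero_iff_dvd).1 h3
    have hdvd : orderOf ((g ^ t)⁻¹ * g) ∣ m₂ := by
      rw [hform]
      apply orderOf_dvd_of_pow_eq_one
      rw [← pow_mul]
      apply orderOf_dvd_iff_pow_eq_one.1
      rw [← hn, ← hmm]
      obtain ⟨k, hk⟩ := hj
      exact ⟨k, by rw [hk]; ring⟩
    exact hprime₂ p hp (hd.trans hdvd) hmem

lemma burnside' (α β : Type*) [Group α] [Finite α] [MulAction α β] [Finite β] :
    Nat.card (Σ a : α, MulAction.fixedBy β a) =
      Nat.card (Quotient (MulAction.orbitRel α β)) * Nat.card α := by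
  classical
  letI : Fintype α := Fintype.ofFinite α
  letI : Fintype β := Fintype.ofFinite β
  letI : ∀ a : α, Fintype (MulAction.fixedBy β a) := fun _ => Fintype.ofFinite _
  letI : Fintype (Quotient (MulAction.orbitRel α β)) := Fintype.ofFinite _
  rw [Nat.card_eq_fintype_card, Nat.card_eq_fintype_card, Nat.card_eq_fintype_card,
    Fintype.card_sigma]
  exact MulAction.sum_card_fixedBy_eq_card_orbits_mul_card_group α β

lemma fixedBy_pair_inj (α β : Type*) [Monoid α] [MulAction α β] :
    Function.Injective
      (fun z : (Σ a : α, MulAction.fixedBy β a) => ((z.1, z.2.val) : α × β)) := by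
  rintro ⟨a₁, b₁, h₁⟩ ⟨a₂, b₂, h₂⟩ h
  obtain ⟨h3, h4⟩ := Prod.ext_iff.1 h
  dsimp at h3 h4
  subst h3
  exact congrArg (Sigma.mk a₁) (Subtype.ext h4)


section Crux

variable {G : Type*} [Group G] [Finite G] (π : Set ℕ)

/-- Chosen π-part of an element. -/
noncomputable def pp (g : G) : G := (pi_part π g).choose

lemma pp_pow (g : G) : ∃ i, pp π g = g ^ i := (pi_part π g).choose_spec.1
lemma ppw_pow (g : G) : ∃ j, (pp π g)⁻¹ * g = g ^ j := (pi_part π g).choose_spec.2.1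
lemma pp_pi (g : G) : IsPiElement π (pp π g) := (pi_part π g).choose_spec.2.2.1
lemma ppw_pi' (g : G) : ∀ p, p.Prime → p ∣ orderOf ((pp π g)⁻¹ * g) → p ∉ π :=
  (pi_part π g).choose_spec.2.2.2

lemma pp_commute (g c : G) (h : Commute g c) : Commute (pp π g) c := by
  obtain ⟨i, hi⟩ := pp_pow π g
  rw [hi]
  exact h.pow_left i

/-- If the image of `g` in a quotient is a `π`-element, then the `π'`-part of `g`
lies in the kernel. -/
lemma ppw_mem {N : Subgroup G} [N.Normal] (g : G)
    (hg : IsPiElement π ((g : G ⧸ N))) : (pp π g)⁻¹ * g ∈ N := by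
  set w := (pp π g)⁻¹ * g with hw
  have h1 : orderOf ((w : G ⧸ N)) ∣ orderOf w := orderOf_map_dvd (QuotientGroup.mk' N) w
  have h2 : IsPiElement π ((w : G ⧸ N)) := by
    obtain ⟨j, hj⟩ := ppw_pow π g
    intro p hp hd
    apply hg p hp
    have : ((w : G ⧸ N)) = ((g : G ⧸ N)) ^ j := by
      rw [hw, hj]; push_cast; rfl
    rw [this] at hd
    exact hd.trans (orderOf_pow_dvd j)
  have h3 : orderOf ((w : G ⧸ N)) = 1 := by
    by_contra hne
    obtain ⟨p, hp, hpd⟩ := Nat.exists_prime_and_dvd hne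
    exact ppw_pi' π g p hp (hpd.trans h1) (h2 p hp hpd)
  have h4 : ((w : G ⧸ N)) = 1 := orderOf_eq_one_iff.1 h3
  exact (QuotientGroup.eq_one_iff w).1 h4

end Crux

section CruxSetup

variable {G : Type*} [Group G] [Finite G] (N : Subgroup G) [N.Normal] (π : Set ℕ) (x : G)

/-- The set of `π`-elements in the coset `xN`, as a type. -/
abbrev SType := {s : G // IsPiElement π s ∧ x⁻¹ * s ∈ N}

/-- The set of `π`-elements of `N`, as a type. -/
abbrev PiNType := {v : N // IsPiElement π v}

instance : MulAction N (SType N π x) where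
  smul n s := ⟨↑n * ↑s * (↑n)⁻¹,
    PiAux.isPi_conj π (↑n) s.2.1, by
      have h1 : x⁻¹ * (↑n * ↑s * (↑n)⁻¹) = (x⁻¹ * ↑n * (x⁻¹)⁻¹) * (x⁻¹ * ↑s) * (↑n)⁻¹ := by
        group
      rw [h1]
      exact mul_mem (mul_mem (‹N.Normal›.conj_mem _ n.2 x⁻¹) s.2.2) (inv_mem n.2)⟩
  one_smul s := by
    apply Subtype.ext
    show ((1 : N) : G) * ↑s * ((1 : N) : G)⁻¹ = ↑s
    simp
  mul_smul m n s := by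
    apply Subtype.ext
    show ((m * n : N) : G) * ↑s * ((m * n : N) : G)⁻¹ =
      ↑m * (↑n * ↑s * (↑n)⁻¹) * (↑m)⁻¹
    push_cast
    group

instance : MulAction N (PiNType N π) where
  smul n v := ⟨n * v * n⁻¹, fun p hp hd => v.2 p hp (by rwa [orderOf_conj'] at hd)⟩
  one_smul v := by apply Subtype.ext; show (1 : N) * ↑v * (1 : N)⁻¹ = ↑v; simp
  mul_smul m n v := by
    apply Subtype.ext
    show (m * n) * ↑v * (m * n)⁻¹ = m * (n * ↑v * n⁻¹) * m⁻¹
    group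

lemma sType_smul_val (n : N) (s : SType N π x) :
    ((n • s : SType N π x) : G) = ↑n * ↑s * (↑n)⁻¹ := rfl

lemma piNType_smul_val (n : N) (v : PiNType N π) :
    ((n • v : PiNType N π) : N) = n * ↑v * n⁻¹ := rfl

/-- A fixed choice of an element of the coset `xN` centralizing `v`, if one exists. -/
noncomputable def c0 (v : G) : G :=
  @dite _ (∃ y : G, x⁻¹ * y ∈ N ∧ Commute y v) (Classical.dec _) (fun h => h.choose) (fun _ => 1)

lemma c0_spec (v : G) (hv : ∃ y : G, x⁻¹ * y ∈ N ∧ Commute y v) :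
    x⁻¹ * c0 N x v ∈ N ∧ Commute (c0 N x v) v := by
  rw [c0]
  rw [dif_pos hv]
  exact hv.choose_spec

end CruxSetup

section CruxMain

variable {G : Type*} [Group G] [Finite G] (N : Subgroup G) [N.Normal] (π : Set ℕ) (x : G)

lemma fix_comm (n : N) (s : SType N π x) (hfix : n • s = s) :
    (↑n : G) * ↑s = ↑s * ↑n := by
  have h := congrArg (Subtype.val) hfix
  rw [sType_smul_val] at h
  exact mul_inv_eq_iff_eq_mul.mp h

lemma main_props (hx : IsPiElement π x) (n : N) (s : SType N π x) (hfix : n • s = s) :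
    ((pp π ((↑n : G) * ↑s))⁻¹ * ↑s ∈ N) ∧
    IsPiElement π ((pp π ((↑n : G) * ↑s))⁻¹ * ↑s) ∧
    ((c0 N x ((pp π ((↑n : G) * ↑s))⁻¹ * ↑s))⁻¹ * (↑n * ↑s) ∈ N) ∧
    Commute ((c0 N x ((pp π ((↑n : G) * ↑s))⁻¹ * ↑s))⁻¹ * ((↑n : G) * ↑s))
      ((pp π ((↑n : G) * ↑s))⁻¹ * ↑s) := by
  have hns : Commute (↑n : G) ↑s := fix_comm N π x n s hfix
  set g := (↑n : G) * ↑s with hgdef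
  have hgcoset : x⁻¹ * g ∈ N := by
    have h1 : x⁻¹ * g = (x⁻¹ * ↑n * (x⁻¹)⁻¹) * (x⁻¹ * ↑s) := by rw [hgdef]; group
    rw [h1]
    exact mul_mem (‹N.Normal›.conj_mem _ n.2 x⁻¹) s.2.2
  have hgbar : IsPiElement π ((g : G ⧸ N)) := by
    have hxg : ((x : G ⧸ N)) = ((g : G ⧸ N)) := QuotientGroup.eq.mpr hgcoset
    intro p hp hd
    rw [← hxg] at hd
    exact hx p hp (hd.trans (orderOf_map_dvd (QuotientGroup.mk' N) x))
  have hw : (pp π g)⁻¹ * g ∈ N := ppw_mem π g hgbar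
  have hsg : Commute (↑s : G) g := hns.symm.mul_right (Commute.refl _)
  have hvN : (pp π g)⁻¹ * ↑s ∈ N := by
    have h1 : (pp π g)⁻¹ * ↑s = ((pp π g)⁻¹ * g) * (g⁻¹ * ↑s) := by group
    have h2 : g⁻¹ * ↑s = (↑s)⁻¹ * (↑n)⁻¹ * ((↑s)⁻¹)⁻¹ := by rw [hgdef]; group
    rw [h1, h2]
    exact mul_mem hw (‹N.Normal›.conj_mem _ (inv_mem n.2) (↑s)⁻¹)
  have hvpi : IsPiElement π ((pp π g)⁻¹ * ↑s) :=
    isPi_mul π ((pp_commute π g ↑s hsg.symm).inv_left) (isPi_inv π (pp_pi π g)) s.2.1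
  have hgv : Commute g ((pp π g)⁻¹ * ↑s) :=
    Commute.mul_right ((pp_commute π g g (Commute.refl g)).symm.inv_right) hsg.symm
  have hex : ∃ y : G, x⁻¹ * y ∈ N ∧ Commute y ((pp π g)⁻¹ * ↑s) := ⟨g, hgcoset, hgv⟩
  obtain ⟨hc0coset, hc0comm⟩ := c0_spec N x _ hex
  have hn'N : (c0 N x ((pp π g)⁻¹ * ↑s))⁻¹ * g ∈ N := by
    have heq : (c0 N x ((pp π g)⁻¹ * ↑s))⁻¹ * g =
        (x⁻¹ * c0 N x ((pp π g)⁻¹ * ↑s))⁻¹ * (x⁻¹ * g) := by group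
    rw [heq]
    exact mul_mem (inv_mem hc0coset) hgcoset
  exact ⟨hvN, hvpi, hn'N, Commute.mul_left hc0comm.inv_left hgv⟩

lemma pairs_inj (hx : IsPiElement π x) :
    ∃ F : (Σ n : N, MulAction.fixedBy (SType N π x) n) →
        (Σ n : N, MulAction.fixedBy (PiNType N π) n), Function.Injective F := by
  refine ⟨fun z =>
    ⟨⟨(c0 N x ((pp π ((↑z.1 : G) * ↑z.2.val))⁻¹ * ↑z.2.val))⁻¹ * ((↑z.1 : G) * ↑z.2.val),
        (main_props N π x hx z.1 z.2.val z.2.prop).2.2.1⟩,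
      ⟨⟨⟨(pp π ((↑z.1 : G) * ↑z.2.val))⁻¹ * ↑z.2.val,
          (main_props N π x hx z.1 z.2.val z.2.prop).1⟩, ?_⟩, ?_⟩⟩, ?_⟩
  · intro p hp hd
    rw [Subgroup.orderOf_mk] at hd
    exact (main_props N π x hx z.1 z.2.val z.2.prop).2.1 p hp hd
  · rw [MulAction.mem_fixedBy]
    apply Subtype.ext
    rw [piNType_smul_val]
    apply Subtype.ext
    push_cast
    have hcomm := (main_props N π x hx z.1 z.2.val z.2.prop).2.2.2
    rw [hcomm.eq, mul_inv_cancel_right]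
  · intro z₁ z₂ h
    have hv : (pp π ((↑z₁.1 : G) * ↑z₁.2.val))⁻¹ * ↑z₁.2.val =
        (pp π ((↑z₂.1 : G) * ↑z₂.2.val))⁻¹ * ↑z₂.2.val :=
      congrArg (fun w => ((((w.2.val : PiNType N π) : N)) : G)) h
    have hA : (c0 N x ((pp π ((↑z₁.1 : G) * ↑z₁.2.val))⁻¹ * ↑z₁.2.val))⁻¹ *
          ((↑z₁.1 : G) * ↑z₁.2.val) =
        (c0 N x ((pp π ((↑z₂.1 : G) * ↑z₂.2.val))⁻¹ * ↑z₂.2.val))⁻¹ *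
          ((↑z₂.1 : G) * ↑z₂.2.val) :=
      congrArg (fun w => ((w.1 : N) : G)) h
    have hc0 : c0 N x ((pp π ((↑z₁.1 : G) * ↑z₁.2.val))⁻¹ * ↑z₁.2.val) =
        c0 N x ((pp π ((↑z₂.1 : G) * ↑z₂.2.val))⁻¹ * ↑z₂.2.val) := congrArg (c0 N x) hv
    rw [hc0] at hA
    have hg : (↑z₁.1 : G) * ↑z₁.2.val = (↑z₂.1 : G) * ↑z₂.2.val := mul_left_cancel hA
    have hps : pp π ((↑z₁.1 : G) * ↑z₁.2.val) = pp π ((↑z₂.1 : G) * ↑z₂.2.val) :=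
      congrArg (pp π) hg
    rw [hps] at hv
    have hs : (↑z₁.2.val : G) = ↑z₂.2.val := mul_left_cancel hv
    have hn : (↑z₁.1 : G) = ↑z₂.1 := by
      rw [hs] at hg
      exact mul_right_cancel hg
    apply fixedBy_pair_inj (N) (SType N π x)
    show (z₁.1, z₁.2.val) = (z₂.1, z₂.2.val)
    exact Prod.ext_iff.mpr ⟨Subtype.ext hn, Subtype.ext hs⟩

end CruxMain

section CruxFinal

variable {G : Type*} [Group G] [Finite G] (N : Subgroup G) [N.Normal] (π : Set ℕ) (x : G)

lemma orbit_card_le (hx : IsPiElement π x) :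
    Nat.card (Quotient (MulAction.orbitRel N (SType N π x))) ≤
      Nat.card (Quotient (MulAction.orbitRel N (PiNType N π))) := by
  obtain ⟨F, hF⟩ := pairs_inj N π x hx
  have h1 := Nat.card_le_card_of_injective F hF
  rw [burnside' N (SType N π x), burnside' N (PiNType N π)] at h1
  exact Nat.le_of_mul_le_mul_right h1 Nat.card_pos

lemma omega_le_piCl :
    Nat.card (Quotient (MulAction.orbitRel N (PiNType N π))) ≤
      Nat.card {c : ConjClasses N // ∀ g ∈ c.carrier, IsPiElement π g} := by
  have hcar : ∀ v : PiNType N π, ∀ a ∈ (ConjClasses.mk v.val).carrier, IsPiElement π a := by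
    intro v a ha
    rw [ConjClasses.mem_carrier_iff_mk_eq] at ha
    obtain ⟨c, hc⟩ := isConj_iff.1 (ConjClasses.mk_eq_mk_iff_isConj.1 ha)
    intro p hp hd
    exact v.2 p hp (by rw [← hc, orderOf_conj']; exact hd)
  have hwd : ∀ a b : PiNType N π, (MulAction.orbitRel N (PiNType N π)) a b →
      (⟨ConjClasses.mk a.val, hcar a⟩ :
        {c : ConjClasses N // ∀ g ∈ c.carrier, IsPiElement π g}) =
      ⟨ConjClasses.mk b.val, hcar b⟩ := by
    intro a b hab
    have hab' : a ∈ MulAction.orbit N b := hab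
    obtain ⟨n, hn⟩ := MulAction.mem_orbit_iff.1 hab'
    apply Subtype.ext
    apply ConjClasses.mk_eq_mk_iff_isConj.2
    apply isConj_iff.2
    refine ⟨n⁻¹, ?_⟩
    have hval : a.val = n * b.val * n⁻¹ := by
      rw [← hn, piNType_smul_val]
    rw [hval]
    group
  apply Nat.card_le_card_of_injective (Quotient.lift _ hwd)
  intro qa qb
  refine Quotient.inductionOn₂ qa qb ?_
  intro a b h
  have h2 : ConjClasses.mk a.val = ConjClasses.mk b.val := by
    simpa using congrArg Subtype.val h
  obtain ⟨c, hc⟩ := isConj_iff.1 (ConjClasses.mk_eq_mk_iff_isConj.1 h2)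
  apply Quotient.sound
  show a ∈ MulAction.orbit N b
  apply MulAction.mem_orbit_iff.2
  refine ⟨c⁻¹, ?_⟩
  apply Subtype.ext
  rw [piNType_smul_val]
  rw [← hc]
  group

lemma fiber_le (hx : IsPiElement π x) :
    Nat.card {c : {c : ConjClasses G // ∀ g ∈ c.carrier, IsPiElement π g} //
        ConjClasses.map (QuotientGroup.mk' N) c.val = ConjClasses.mk ((x : G ⧸ N))} ≤
      Nat.card {c : ConjClasses N // ∀ g ∈ c.carrier, IsPiElement π g} := by
  classical
  have hEx : ∀ c : {c : {c : ConjClasses G // ∀ g ∈ c.carrier, IsPiElement π g} //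
      ConjClasses.map (QuotientGroup.mk' N) c.val = ConjClasses.mk ((x : G ⧸ N))},
      ∃ s : G, (IsPiElement π s ∧ x⁻¹ * s ∈ N) ∧ ConjClasses.mk s = c.val.val := by
    intro c
    obtain ⟨g₀, hg₀⟩ := ConjClasses.exists_rep c.val.val
    have hmap : ConjClasses.mk ((g₀ : G ⧸ N)) = ConjClasses.mk ((x : G ⧸ N)) := by
      have h1 : ConjClasses.map (QuotientGroup.mk' N) (ConjClasses.mk g₀) =
          ConjClasses.mk ((g₀ : G ⧸ N)) := rfl
      rw [← h1, hg₀]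
      exact c.prop
    obtain ⟨u, hu⟩ := isConj_iff.1 (ConjClasses.mk_eq_mk_iff_isConj.1 hmap)
    obtain ⟨h, rfl⟩ := QuotientGroup.mk_surjective u
    have hπg₀ : IsPiElement π g₀ := c.val.prop g₀ (ConjClasses.mem_carrier_iff_mk_eq.2 hg₀)
    refine ⟨h * g₀ * h⁻¹, ⟨isPi_conj π h hπg₀, ?_⟩, ?_⟩
    · have h2 : (((h * g₀ * h⁻¹ : G) : G ⧸ N)) = ((h : G ⧸ N)) * ((g₀ : G ⧸ N)) * ((h : G ⧸ N))⁻¹ := by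
        push_cast
        rfl
      have hbar : ((x : G ⧸ N)) = (((h * g₀ * h⁻¹ : G) : G ⧸ N)) := (h2.trans hu).symm
      exact QuotientGroup.eq.mp hbar
    · rw [← hg₀]
      apply ConjClasses.mk_eq_mk_iff_isConj.2
      apply isConj_iff.2
      exact ⟨h⁻¹, by group⟩
  set f := fun c : {c : {c : ConjClasses G // ∀ g ∈ c.carrier, IsPiElement π g} //
      ConjClasses.map (QuotientGroup.mk' N) c.val = ConjClasses.mk ((x : G ⧸ N))} =>
    Quotient.mk (MulAction.orbitRel N (SType N π x))
      ⟨(hEx c).choose, (hEx c).choose_spec.1⟩ with hfdef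
  have hinj : Function.Injective f := by
    intro c₁ c₂ h
    have h2 : (⟨(hEx c₁).choose, (hEx c₁).choose_spec.1⟩ : SType N π x) ∈
        MulAction.orbit N (⟨(hEx c₂).choose, (hEx c₂).choose_spec.1⟩ : SType N π x) :=
      Quotient.exact h
    obtain ⟨n, hn⟩ := MulAction.mem_orbit_iff.1 h2
    have hval : (hEx c₁).choose = ↑n * (hEx c₂).choose * (↑n : G)⁻¹ := by
      have := congrArg Subtype.val hn
      rw [sType_smul_val] at this
      exact this.symm
    have hmk : ConjClasses.mk (hEx c₁).choose = ConjClasses.mk (hEx c₂).choose := by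
      apply ConjClasses.mk_eq_mk_iff_isConj.2
      apply isConj_iff.2
      exact ⟨(↑n : G)⁻¹, by rw [hval]; group⟩
    apply Subtype.ext
    apply Subtype.ext
    rw [← (hEx c₁).choose_spec.2, ← (hEx c₂).choose_spec.2, hmk]
  calc Nat.card _ ≤ Nat.card (Quotient (MulAction.orbitRel N (SType N π x))) :=
        Nat.card_le_card_of_injective f hinj
    _ ≤ Nat.card (Quotient (MulAction.orbitRel N (PiNType N π))) := orbit_card_le N π x hx
    _ ≤ _ := omega_le_piCl N π

end CruxFinal

section Assembly

variable {G : Type*} [Group G] [Finite G] (N : Subgroup G) [N.Normal] (π : Set ℕ)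

lemma map_carrier_pi (c : ConjClasses G) (hc : ∀ g ∈ c.carrier, IsPiElement π g) :
    ∀ a ∈ (ConjClasses.map (QuotientGroup.mk' N) c).carrier, IsPiElement π a := by
  obtain ⟨g, rfl⟩ := ConjClasses.exists_rep c
  intro a ha
  rw [ConjClasses.mem_carrier_iff_mk_eq] at ha
  have h1 : ConjClasses.map (QuotientGroup.mk' N) (ConjClasses.mk g) =
      ConjClasses.mk ((g : G ⧸ N)) := rfl
  rw [h1] at ha
  obtain ⟨u, hu⟩ := isConj_iff.1 (ConjClasses.mk_eq_mk_iff_isConj.1 ha)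
  intro p hp hd
  have hg : IsPiElement π g := hc g ConjClasses.mem_carrier_mk
  apply hg p hp
  have h2 : orderOf a = orderOf ((g : G ⧸ N)) := by rw [← hu, orderOf_conj']
  rw [h2] at hd
  exact hd.trans (orderOf_map_dvd (QuotientGroup.mk' N) g)

end Assembly

end PiAux

/-- Lemma 2.3: `k_π(G) ≤ k_π(G/N) ⬝ k_π(N)`. -/
theorem stmt_1 {G : Type*} [Group G] [Finite G] (N : Subgroup G) [N.Normal]
    (π : Set ℕ) :
    Nat.card {c : ConjClasses G // ∀ g ∈ c.carrier, IsPiElement π g} ≤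
      Nat.card {c : ConjClasses (G ⧸ N) // ∀ g ∈ c.carrier, IsPiElement π g} *
      Nat.card {c : ConjClasses N // ∀ g ∈ c.carrier, IsPiElement π g} := by
  classical
  let Fm : {c : ConjClasses G // ∀ g ∈ c.carrier, IsPiElement π g} →
      {c : ConjClasses (G ⧸ N) // ∀ g ∈ c.carrier, IsPiElement π g} :=
    fun c => ⟨ConjClasses.map (QuotientGroup.mk' N) c.val,
      PiAux.map_carrier_pi N π c.val c.prop⟩
  have key : ∀ b : {c : ConjClasses (G ⧸ N) // ∀ g ∈ c.carrier, IsPiElement π g},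
      Nat.card {c // Fm c = b} ≤
        Nat.card {c : ConjClasses N // ∀ g ∈ c.carrier, IsPiElement π g} := by
    intro b
    by_cases hb : Nonempty {c // Fm c = b}
    · obtain ⟨c₀⟩ := hb
      obtain ⟨x, hxmk⟩ := ConjClasses.exists_rep c₀.val.val
      have hxpi : IsPiElement π x :=
        c₀.val.prop x (ConjClasses.mem_carrier_iff_mk_eq.2 hxmk)
      have hbval : b.val = ConjClasses.mk ((x : G ⧸ N)) := by
        rw [← c₀.prop]
        show ConjClasses.map (QuotientGroup.mk' N) c₀.val.val = ConjClasses.mk ((x : G ⧸ N))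
        rw [← hxmk]
        rfl
      have hEquiv : {c // Fm c = b} ≃
          {c : {c : ConjClasses G // ∀ g ∈ c.carrier, IsPiElement π g} //
            ConjClasses.map (QuotientGroup.mk' N) c.val = ConjClasses.mk ((x : G ⧸ N))} := by
        apply Equiv.subtypeEquivRight
        intro c
        rw [Subtype.ext_iff, hbval]
      rw [Nat.card_congr hEquiv]
      exact PiAux.fiber_le N π x hxpi
    · rw [not_nonempty_iff] at hb
      rw [Nat.card_of_isEmpty]
      exact Nat.zero_le _
  letI : Fintype {c : ConjClasses (G ⧸ N) // ∀ g ∈ c.carrier, IsPiElement π g} :=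
    Fintype.ofFinite _
  letI : ∀ b : {c : ConjClasses (G ⧸ N) // ∀ g ∈ c.carrier, IsPiElement π g},
      Fintype {c // Fm c = b} := fun b => Fintype.ofFinite _
  letI : Fintype {c : ConjClasses N // ∀ g ∈ c.carrier, IsPiElement π g} :=
    Fintype.ofFinite _
  calc Nat.card {c : ConjClasses G // ∀ g ∈ c.carrier, IsPiElement π g}
      = Nat.card (Σ b : {c : ConjClasses (G ⧸ N) // ∀ g ∈ c.carrier, IsPiElement π g},
          {c // Fm c = b}) := (Nat.card_congr (Equiv.sigmaFiberEquiv Fm)).symm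
    _ = ∑ b : {c : ConjClasses (G ⧸ N) // ∀ g ∈ c.carrier, IsPiElement π g},
          Nat.card {c // Fm c = b} := by
        rw [Nat.card_eq_fintype_card, Fintype.card_sigma]
        exact Finset.sum_congr rfl fun b _ => (Nat.card_eq_fintype_card).symm
    _ ≤ ∑ _b : {c : ConjClasses (G ⧸ N) // ∀ g ∈ c.carrier, IsPiElement π g},
          Nat.card {c : ConjClasses N // ∀ g ∈ c.carrier, IsPiElement π g} :=
        Finset.sum_le_sum fun b _ => key b
    _ = Nat.card {c : ConjClasses (G ⧸ N) // ∀ g ∈ c.carrier, IsPiElement π g} *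
          Nat.card {c : ConjClasses N // ∀ g ∈ c.carrier, IsPiElement π g} := by
        simp only [Finset.sum_const, Finset.card_univ, smul_eq_mul,
          Nat.card_eq_fintype_card]
end

section
/- Let G be a finite group, N a normal subgroup of G, and π a set of prime numbers containing every prime divisor of the index [G:N]. Suppose that every π-element g of G satisfies G = N · C_G(g), where C_G(g) is the centralizer of g in G. Then G/N is abelian, and for every x ∈ G the number of conjugacy classes of G that consist of π-elements and are contained in the coset xN is equal to k_π(N). -/
/-- complementary: a `π'`-element -/
def IsPiCoElement {G : Type*} [Monoid G] (π : Set ℕ) (g : G) : Prop :=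
  ∀ p : ℕ, p.Prime → p ∣ orderOf g → p ∉ π

section PiPart

variable {G : Type*} [Group G] [Finite G] (π : Set ℕ)

open Classical in
/-- the π-part of the order of `y` -/
noncomputable def piA (y : G) : ℕ :=
  ∏ p ∈ (orderOf y).primeFactors.filter (· ∈ π), p ^ (orderOf y).factorization p

open Classical in
/-- the π'-part of the order of `y` -/
noncomputable def piB (y : G) : ℕ :=
  ∏ p ∈ (orderOf y).primeFactors.filter (¬ · ∈ π), p ^ (orderOf y).factorization p

lemma piA_mul_piB (y : G) : piA π y * piB π y = orderOf y := by
  classical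
  rw [piA, piB]
  rw [Finset.prod_filter_mul_prod_filter_not]
  rw [← Nat.prod_factorization_eq_prod_primeFactors (· ^ ·)]
  exact Nat.factorization_prod_pow_eq_self (orderOf_pos y).ne'

lemma prime_dvd_piA {y : G} {p : ℕ} (hp : p.Prime) (hpa : p ∣ piA π y) : p ∈ π := by
  classical
  rw [piA] at hpa
  obtain ⟨q, hq, hpq⟩ := (Prime.dvd_finset_prod_iff hp.prime _).mp hpa
  have : p = q := (Nat.prime_dvd_prime_iff_eq hp (Nat.prime_of_mem_primeFactors
    (Finset.mem_filter.mp hq).1)).mp (hp.dvd_of_dvd_pow hpq)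
  subst this
  exact (Finset.mem_filter.mp hq).2

lemma prime_dvd_piB {y : G} {p : ℕ} (hp : p.Prime) (hpb : p ∣ piB π y) : p ∉ π := by
  classical
  rw [piB] at hpb
  obtain ⟨q, hq, hpq⟩ := (Prime.dvd_finset_prod_iff hp.prime _).mp hpb
  have : p = q := (Nat.prime_dvd_prime_iff_eq hp (Nat.prime_of_mem_primeFactors
    (Finset.mem_filter.mp hq).1)).mp (hp.dvd_of_dvd_pow hpq)
  subst this
  exact (Finset.mem_filter.mp hq).2

/-- two natural numbers with no common prime divisor are coprime -/
lemma coprime_of_prime_disjoint {a b : ℕ} (h : ∀ p : ℕ, p.Prime → p ∣ a → p ∣ b → False) :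
    Nat.Coprime a b := by
  by_contra hcop
  obtain ⟨p, hp, hpa, hpb⟩ := Nat.Prime.not_coprime_iff_dvd.mp hcop
  exact h p hp hpa hpb

lemma coprime_piA_piB (y : G) : Nat.Coprime (piA π y) (piB π y) :=
  coprime_of_prime_disjoint fun p hp hpa hpb => (prime_dvd_piB π hp hpb) (prime_dvd_piA π hp hpa)

/-- the π-part of a group element -/
noncomputable def piPart (y : G) : G :=
  y ^ (Nat.gcdB (piA π y) (piB π y) * (piB π y : ℤ))

/-- the π'-part of a group element -/
noncomputable def piCoPart (y : G) : G :=
  y ^ (Nat.gcdA (piA π y) (piB π y) * (piA π y : ℤ))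

lemma bezout_piAB (y : G) :
    Nat.gcdA (piA π y) (piB π y) * (piA π y : ℤ) + Nat.gcdB (piA π y) (piB π y) * (piB π y : ℤ)
      = 1 := by
  have h := Nat.gcd_eq_gcd_ab (piA π y) (piB π y)
  rw [Nat.Coprime.gcd_eq_one (coprime_piA_piB π y)] at h
  push_cast at h
  linarith

lemma piPart_mul_piCoPart (y : G) : piPart π y * piCoPart π y = y := by
  rw [piPart, piCoPart, ← zpow_add]
  have h := bezout_piAB π y
  rw [show Nat.gcdB (piA π y) (piB π y) * (piB π y : ℤ)
      + Nat.gcdA (piA π y) (piB π y) * (piA π y : ℤ) = 1 by linarith]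
  exact zpow_one y

lemma commute_piPart_right {x y : G} (h : Commute x y) : Commute x (piPart π y) :=
  h.zpow_right _

lemma commute_piCoPart_right {x y : G} (h : Commute x y) : Commute x (piCoPart π y) :=
  h.zpow_right _

lemma orderOf_piPart_dvd (y : G) : orderOf (piPart π y) ∣ piA π y := by
  apply orderOf_dvd_of_pow_eq_one
  rw [piPart, ← zpow_natCast _ (piA π y), ← zpow_mul]
  have h1 : Nat.gcdB (piA π y) (piB π y) * (piB π y : ℤ) * (piA π y : ℤ)
      = ((piA π y * piB π y : ℕ) : ℤ) * Nat.gcdB (piA π y) (piB π y) := by push_cast; ring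
  rw [h1, piA_mul_piB, zpow_mul, zpow_natCast, pow_orderOf_eq_one, one_zpow]

lemma orderOf_piCoPart_dvd (y : G) : orderOf (piCoPart π y) ∣ piB π y := by
  apply orderOf_dvd_of_pow_eq_one
  rw [piCoPart, ← zpow_natCast _ (piB π y), ← zpow_mul]
  have h1 : Nat.gcdA (piA π y) (piB π y) * (piA π y : ℤ) * (piB π y : ℤ)
      = ((piA π y * piB π y : ℕ) : ℤ) * Nat.gcdA (piA π y) (piB π y) := by push_cast; ring
  rw [h1, piA_mul_piB, zpow_mul, zpow_natCast, pow_orderOf_eq_one, one_zpow]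

lemma isPiElement_piPart (y : G) : IsPiElement π (piPart π y) :=
  fun p hp hpo => prime_dvd_piA π hp (hpo.trans (orderOf_piPart_dvd π y))

lemma isPiCoElement_piCoPart (y : G) : IsPiCoElement π (piCoPart π y) :=
  fun p hp hpo => prime_dvd_piB π hp (hpo.trans (orderOf_piCoPart_dvd π y))

end PiPart

section Unique

variable {G : Type*} [Group G] [Finite G] (π : Set ℕ)

/-- Uniqueness of the π-decomposition: if `s` is a π-element and `v` a π'-element
which commute, then `piPart (s*v) = s` and `piCoPart (s*v) = v`. -/
lemma piPart_eq_of (s v : G) (hs : IsPiElement π s) (hv : IsPiCoElement π v)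
    (hc : Commute s v) : piPart π (s * v) = s ∧ piCoPart π (s * v) = v := by
  set y := s * v with hy
  have hco : Nat.Coprime (orderOf s) (orderOf v) :=
    coprime_of_prime_disjoint fun p hp hps hpv => (hv p hp hpv) (hs p hp hps)
  have horder : orderOf y = orderOf s * orderOf v :=
    hc.orderOf_mul_eq_mul_orderOf_of_coprime hco
  -- orderOf s ∣ piA y
  have hsA : orderOf s ∣ piA π y := by
    have h1 : orderOf s ∣ piA π y * piB π y := by
      rw [piA_mul_piB, horder]; exact Dvd.intro _ rfl
    have h2 : Nat.Coprime (orderOf s) (piB π y) :=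
      coprime_of_prime_disjoint fun p hp hps hpb => (prime_dvd_piB π hp hpb) (hs p hp hps)
    exact (Nat.Coprime.dvd_of_dvd_mul_right h2) h1
  have hvB : orderOf v ∣ piB π y := by
    have h1 : orderOf v ∣ piA π y * piB π y := by
      rw [piA_mul_piB, horder]; exact Dvd.intro_left _ rfl
    have h2 : Nat.Coprime (orderOf v) (piA π y) :=
      coprime_of_prime_disjoint fun p hp hpv hpa => (hv p hp hpv) (prime_dvd_piA π hp hpa)
    exact (Nat.Coprime.dvd_of_dvd_mul_left h2) h1
  have hPart : piPart π y = s := by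
    rw [piPart]
    rw [hc.mul_zpow]
    have hv1 : v ^ (Nat.gcdB (piA π y) (piB π y) * (piB π y : ℤ)) = 1 := by
      rw [mul_comm, zpow_mul]
      have : v ^ ((piB π y : ℤ)) = 1 := by
        rw [zpow_natCast]
        exact orderOf_dvd_iff_pow_eq_one.mp hvB
      rw [this, one_zpow]
    have hs1 : s ^ (Nat.gcdB (piA π y) (piB π y) * (piB π y : ℤ)) = s := by
      have hb := bezout_piAB π y
      have h3 : Nat.gcdB (piA π y) (piB π y) * (piB π y : ℤ)
          = 1 - Nat.gcdA (piA π y) (piB π y) * (piA π y : ℤ) := by linarith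
      rw [h3, zpow_sub, zpow_one, mul_comm (Nat.gcdA (piA π y) (piB π y)), zpow_mul]
      have : s ^ ((piA π y : ℤ)) = 1 := by
        rw [zpow_natCast]
        exact orderOf_dvd_iff_pow_eq_one.mp hsA
      rw [this, one_zpow, inv_one, mul_one]
    rw [hs1, hv1, mul_one]
  refine ⟨hPart, ?_⟩
  have := piPart_mul_piCoPart π y
  rw [hPart] at this
  -- s * piCoPart = s * v
  have h4 : s * piCoPart π y = s * v := by rw [this, hy]
  exact mul_left_cancel h4

end Unique

/-- translation of commuting sets along a conjugation -/
noncomputable def centConjEquiv {H : Type*} [Group H] (u₀ u : H)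
    (hg : ∃ g : H, g * u₀ * g⁻¹ = u) :
    {y : H // Commute u₀ y} ≃ {y : H // Commute u y} := by
  classical
  have hgc := Classical.choose_spec hg
  set g := Classical.choose hg with hgdef
  refine
    { toFun := fun y => ⟨g * y.1 * g⁻¹, ?_⟩
      invFun := fun y => ⟨g⁻¹ * y.1 * g, ?_⟩
      left_inv := ?_
      right_inv := ?_ }
  · have h2 := (y.2).map (MulAut.conj g).toMonoidHom
    simpa [MulAut.conj_apply, hgc] using h2
  · have h2 := (y.2).map (MulAut.conj g⁻¹).toMonoidHom
    have h3 : g⁻¹ * u * g = u₀ := by rw [← hgc]; group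
    simpa [MulAut.conj_apply, h3] using h2
  · intro y; ext; simp [mul_assoc]
  · intro y; ext; simp [mul_assoc]

open MulAction in
/-- The union over a conjugacy class of the centralizers of its elements
is in bijection with the whole group. -/
noncomputable def sigmaCommuteEquiv {H : Type*} [Group H] (u₀ : H) :
    (Σ u : {u : H // ConjClasses.mk u = ConjClasses.mk u₀}, {y : H // Commute u.1 y}) ≃ H := by
  classical
  have e1 : (Σ u : {u : H // ConjClasses.mk u = ConjClasses.mk u₀}, {y : H // Commute u.1 y})
      ≃ (Σ _u : {u : H // ConjClasses.mk u = ConjClasses.mk u₀}, {y : H // Commute u₀ y}) := by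
    refine Equiv.sigmaCongrRight (fun u => (centConjEquiv u₀ u.1 ?_).symm)
    have h1 : IsConj u₀ u.1 := ConjClasses.mk_eq_mk_iff_isConj.mp u.2.symm
    obtain ⟨c, hc⟩ := isConj_iff.mp h1
    exact ⟨c, hc⟩
  have e2 : (Σ _u : {u : H // ConjClasses.mk u = ConjClasses.mk u₀}, {y : H // Commute u₀ y})
      ≃ {u : H // ConjClasses.mk u = ConjClasses.mk u₀} × {y : H // Commute u₀ y} :=
    Equiv.sigmaEquivProd _ _
  have e3 : {u : H // ConjClasses.mk u = ConjClasses.mk u₀} ≃ orbit (ConjAct H) u₀ := by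
    refine Equiv.subtypeEquiv (Equiv.refl H) (fun u => ?_)
    simp only [Equiv.refl_apply]
    rw [ConjAct.mem_orbit_conjAct, ConjClasses.mk_eq_mk_iff_isConj]
  have hmem1 : ∀ y : {y : H // Commute u₀ y}, ConjAct.toConjAct y.1 ∈ stabilizer (ConjAct H) u₀ := by
    intro y
    rw [MulAction.mem_stabilizer_iff, ConjAct.smul_def, ConjAct.ofConjAct_toConjAct,
      mul_inv_eq_iff_eq_mul]
    exact y.2.symm.eq
  have hmem2 : ∀ g : stabilizer (ConjAct H) u₀, Commute u₀ (ConjAct.ofConjAct g.1) := by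
    intro g
    have h2 : ConjAct.ofConjAct g.1 * u₀ * (ConjAct.ofConjAct g.1)⁻¹ = u₀ := by
      have h3 := g.2
      rwa [MulAction.mem_stabilizer_iff, ConjAct.smul_def] at h3
    rw [mul_inv_eq_iff_eq_mul] at h2
    exact Commute.symm h2
  have e4 : {y : H // Commute u₀ y} ≃ stabilizer (ConjAct H) u₀ :=
    { toFun := fun y => ⟨ConjAct.toConjAct y.1, hmem1 y⟩
      invFun := fun g => ⟨ConjAct.ofConjAct g.1, hmem2 g⟩
      left_inv := fun y => by ext; simp
      right_inv := fun g => by ext; simp }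
  have e5 : orbit (ConjAct H) u₀ × stabilizer (ConjAct H) u₀
      ≃ (ConjAct H ⧸ stabilizer (ConjAct H) u₀) × stabilizer (ConjAct H) u₀ :=
    Equiv.prodCongr (orbitEquivQuotientStabilizer (ConjAct H) u₀) (Equiv.refl _)
  have e6 : (ConjAct H ⧸ stabilizer (ConjAct H) u₀) × stabilizer (ConjAct H) u₀ ≃ ConjAct H :=
    (Subgroup.groupEquivQuotientProdSubgroup).symm
  exact e1.trans (e2.trans ((Equiv.prodCongr e3 e4).trans (e5.trans (e6.trans
    ConjAct.ofConjAct.toEquiv))))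

/-- regroup a sigma type over the fibers of a map on the index -/
def sigmaFiberDepEquiv {α β : Type*} (f : α → β) (F : α → Type*) :
    (Σ a, F a) ≃ (Σ b : β, Σ v : {a // f a = b}, F v.1) where
  toFun x := ⟨f x.1, ⟨x.1, rfl⟩, x.2⟩
  invFun x := ⟨x.2.1.1, x.2.2⟩
  left_inv x := rfl
  right_inv := fun ⟨b, ⟨a, h⟩, x⟩ => by subst h; rfl

/-- The key counting principle: pairs (u, y) with `Φ u`, `u` and `y` commuting, are
counted by (number of conjugacy classes satisfying Φ) times |H|. -/
theorem pair_card {H : Type*} [Group H] (Φ : H → Prop)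
    (hΦ : ∀ g h : H, Φ g → Φ (h * g * h⁻¹)) :
    Nat.card {p : H × H // Φ p.1 ∧ Commute p.1 p.2} =
      Nat.card {c : ConjClasses H // ∀ g ∈ c.carrier, Φ g} * Nat.card H := by
  classical
  set A := {c : ConjClasses H // ∀ g ∈ c.carrier, Φ g} with hA
  -- the class of an element satisfying Φ lies in A
  have hclass : ∀ u : H, Φ u → ∀ g ∈ (ConjClasses.mk u).carrier, Φ g := by
    intro u hu g hg
    rw [ConjClasses.mem_carrier_iff_mk_eq] at hg
    have h1 : IsConj u g := ConjClasses.mk_eq_mk_iff_isConj.mp hg.symm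
    obtain ⟨cc, hcc⟩ := isConj_iff.mp h1
    rw [← hcc]
    exact hΦ u cc hu
  set f : {u : H // Φ u} → A := fun u => ⟨ConjClasses.mk u.1, hclass u.1 u.2⟩ with hf
  -- chosen representative of each class in A
  set rep : A → H := fun c => Classical.choose (ConjClasses.exists_rep c.1) with hrep
  have hrep_spec : ∀ c : A, ConjClasses.mk (rep c) = c.1 :=
    fun c => Classical.choose_spec (ConjClasses.exists_rep c.1)
  -- step 1 : pairs ≃ sigma over u of commuting elements
  have E1 : {p : H × H // Φ p.1 ∧ Commute p.1 p.2}
      ≃ Σ u : {u : H // Φ u}, {y : H // Commute u.1 y} :=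
    { toFun := fun p => ⟨⟨p.1.1, p.2.1⟩, ⟨p.1.2, p.2.2⟩⟩
      invFun := fun x => ⟨(x.1.1, x.2.1), x.1.2, x.2.2⟩
      left_inv := fun p => rfl
      right_inv := fun x => rfl }
  -- step 2 : regroup over classes
  have E2 := sigmaFiberDepEquiv f (fun u => {y : H // Commute u.1 y})
  -- step 3 : for each class, flatten and apply sigmaCommuteEquiv
  have E3 : ∀ c : A, (Σ v : {u' : {u : H // Φ u} // f u' = c}, {y : H // Commute v.1.1 y})
      ≃ (Σ u : {u : H // ConjClasses.mk u = ConjClasses.mk (rep c)}, {y : H // Commute u.1 y}) := by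
    intro c
    have key1 : ∀ v : {u' : {u : H // Φ u} // f u' = c},
        ConjClasses.mk (v.1.1 : H) = ConjClasses.mk (rep c) := by
      intro v
      have h1 : ConjClasses.mk (v.1.1 : H) = c.1 := congrArg Subtype.val v.2
      rw [h1, hrep_spec c]
    have key2 : ∀ u : {u : H // ConjClasses.mk u = ConjClasses.mk (rep c)}, Φ u.1 := by
      intro u
      have h2 : (u.1 : H) ∈ (c.1).carrier := by
        rw [ConjClasses.mem_carrier_iff_mk_eq, u.2, hrep_spec c]
      exact c.2 _ h2
    have key3 : ∀ u : {u : H // ConjClasses.mk u = ConjClasses.mk (rep c)},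
        f ⟨u.1, key2 u⟩ = c := by
      intro u
      apply Subtype.ext
      show ConjClasses.mk u.1 = c.1
      rw [u.2, hrep_spec c]
    exact
      { toFun := fun x => ⟨⟨x.1.1.1, key1 x.1⟩, x.2⟩
        invFun := fun x => ⟨⟨⟨x.1.1, key2 x.1⟩, key3 x.1⟩, x.2⟩
        left_inv := fun x => rfl
        right_inv := fun x => rfl }
  -- assemble
  have E4 : {p : H × H // Φ p.1 ∧ Commute p.1 p.2} ≃ A × H := by
    refine (E1.trans (E2.trans ?_)).trans (Equiv.sigmaEquivProd A H)
    exact Equiv.sigmaCongrRight (fun c => (E3 c).trans (sigmaCommuteEquiv (rep c)))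
  rw [Nat.card_congr E4, Nat.card_prod]

section Specific

variable {G : Type*} [Group G] [Finite G] (N : Subgroup G) [N.Normal] (π : Set ℕ)

/-- image in the quotient of a π'-element is trivial, provided all primes of the
index lie in π. -/
lemma mk_of_piCo (hπ : ∀ p : ℕ, p.Prime → p ∣ N.index → p ∈ π)
    {v : G} (hv : IsPiCoElement π v) : (QuotientGroup.mk v : G ⧸ N) = 1 := by
  rw [← orderOf_eq_one_iff]
  set m := orderOf (QuotientGroup.mk v : G ⧸ N) with hm
  by_contra hne
  obtain ⟨p, hp, hpm⟩ := Nat.exists_prime_and_dvd hne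
  have h1 : p ∣ orderOf v := hpm.trans (orderOf_map_dvd (QuotientGroup.mk' N) v)
  have h2 : p ∣ N.index := by
    refine hpm.trans ?_
    rw [Subgroup.index_eq_card]
    exact orderOf_dvd_natCard _
  exact hv p hp h1 (hπ p hp h2)

/-- the magic swap: pairs (u, y) with u a π-element in a fixed coset and y commuting
with u, biject with pairs (s, z) with s any π-element and z in its centralizer lying
in the fixed coset. -/
noncomputable def magicEquiv (hπ : ∀ p : ℕ, p.Prime → p ∣ N.index → p ∈ π) (x : G) :
    {p : G × G // (IsPiElement π p.1 ∧ (QuotientGroup.mk p.1 : G ⧸ N) = QuotientGroup.mk x)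
        ∧ Commute p.1 p.2}
    ≃ {p : G × G // (IsPiElement π p.1 ∧ Commute p.1 p.2)
        ∧ (QuotientGroup.mk p.2 : G ⧸ N) = QuotientGroup.mk x} := by
  refine
    { toFun := fun p => ⟨(piPart π p.1.2, p.1.1 * piCoPart π p.1.2), ?_⟩
      invFun := fun p => ⟨(piPart π p.1.2, p.1.1 * piCoPart π p.1.2), ?_⟩
      left_inv := ?_
      right_inv := ?_ }
  · obtain ⟨⟨u, y⟩, ⟨⟨hu, hmk⟩, hcom⟩⟩ := p
    refine ⟨⟨isPiElement_piPart π y, ?_⟩, ?_⟩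
    · exact Commute.mul_right ((commute_piPart_right π hcom).symm)
        (((Commute.refl y).zpow_left _).zpow_right _)
    · show (QuotientGroup.mk (u * piCoPart π y) : G ⧸ N) = QuotientGroup.mk x
      rw [QuotientGroup.mk_mul, mk_of_piCo N π hπ (isPiCoElement_piCoPart π y), mul_one, hmk]
  · obtain ⟨⟨s, z⟩, ⟨⟨hs, hcom⟩, hmk⟩⟩ := p
    refine ⟨⟨isPiElement_piPart π z, ?_⟩, ?_⟩
    · show (QuotientGroup.mk (piPart π z) : G ⧸ N) = QuotientGroup.mk x
      have h1 : (QuotientGroup.mk (piPart π z * piCoPart π z) : G ⧸ N) = QuotientGroup.mk x := by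
        rw [piPart_mul_piCoPart]; exact hmk
      rwa [QuotientGroup.mk_mul, mk_of_piCo N π hπ (isPiCoElement_piCoPart π z), mul_one] at h1
    · exact Commute.mul_right ((commute_piPart_right π hcom).symm)
        (((Commute.refl z).zpow_left _).zpow_right _)
  · rintro ⟨⟨u, y⟩, ⟨⟨hu, hmk⟩, hcom⟩⟩
    apply Subtype.ext
    show (piPart π (u * piCoPart π y), piPart π y * piCoPart π (u * piCoPart π y)) = (u, y)
    have h5 := piPart_eq_of π u (piCoPart π y) hu (isPiCoElement_piCoPart π y)
      (commute_piCoPart_right π hcom)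
    rw [h5.1, h5.2, piPart_mul_piCoPart]
  · rintro ⟨⟨s, z⟩, ⟨⟨hs, hcom⟩, hmk⟩⟩
    apply Subtype.ext
    show (piPart π (s * piCoPart π z), piPart π z * piCoPart π (s * piCoPart π z)) = (s, z)
    have h5 := piPart_eq_of π s (piCoPart π z) hs (isPiCoElement_piCoPart π z)
      (commute_piCoPart_right π hcom)
    rw [h5.1, h5.2, piPart_mul_piCoPart]

/-- translation between the coset fibers of the centralizer-side pairs -/
noncomputable def translateEquiv
    (hfac : ∀ g : G, IsPiElement π g →
      ∀ x : G, ∃ n ∈ N, ∃ c ∈ Subgroup.centralizer ({g} : Set G), x = n * c) (x : G) :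
    {p : G × G // (IsPiElement π p.1 ∧ Commute p.1 p.2)
        ∧ (QuotientGroup.mk p.2 : G ⧸ N) = QuotientGroup.mk x}
    ≃ {p : G × G // (IsPiElement π p.1 ∧ Commute p.1 p.2)
        ∧ (QuotientGroup.mk p.2 : G ⧸ N) = QuotientGroup.mk 1} := by
  classical
  have hex : ∀ s : G, IsPiElement π s →
      ∃ c : G, Commute s c ∧ (QuotientGroup.mk c : G ⧸ N) = QuotientGroup.mk x := by
    intro s hs
    obtain ⟨n, hn, c, hc, hx⟩ := hfac s hs x
    refine ⟨c, ?_, ?_⟩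
    · exact (Subgroup.mem_centralizer_iff.mp hc) s rfl
    · rw [hx, QuotientGroup.mk_mul, (QuotientGroup.eq_one_iff n).mpr hn, one_mul]
  set cf : G → G := fun s => if h : IsPiElement π s then Classical.choose (hex s h) else 1
    with hcf
  have hcf_comm : ∀ s : G, IsPiElement π s → Commute s (cf s) := by
    intro s h
    rw [hcf]; simp only [dif_pos h]
    exact (Classical.choose_spec (hex s h)).1
  have hcf_mk : ∀ s : G, IsPiElement π s →
      (QuotientGroup.mk (cf s) : G ⧸ N) = QuotientGroup.mk x := by
    intro s h
    rw [hcf]; simp only [dif_pos h]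
    exact (Classical.choose_spec (hex s h)).2
  refine
    { toFun := fun p => ⟨(p.1.1, (cf p.1.1)⁻¹ * p.1.2), ?_⟩
      invFun := fun p => ⟨(p.1.1, cf p.1.1 * p.1.2), ?_⟩
      left_inv := ?_
      right_inv := ?_ }
  · obtain ⟨⟨s, z⟩, ⟨⟨hs, hcom⟩, hmk⟩⟩ := p
    refine ⟨⟨hs, Commute.mul_right ((hcf_comm s hs).inv_right) hcom⟩, ?_⟩
    show (QuotientGroup.mk ((cf s)⁻¹ * z) : G ⧸ N) = QuotientGroup.mk 1
    rw [QuotientGroup.mk_mul, QuotientGroup.mk_inv, hcf_mk s hs, hmk]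
    simp
  · obtain ⟨⟨s, w⟩, ⟨⟨hs, hcom⟩, hmk⟩⟩ := p
    refine ⟨⟨hs, Commute.mul_right (hcf_comm s hs) hcom⟩, ?_⟩
    show (QuotientGroup.mk (cf s * w) : G ⧸ N) = QuotientGroup.mk x
    rw [QuotientGroup.mk_mul, hcf_mk s hs, hmk]
    simp
  · rintro ⟨⟨s, z⟩, _⟩
    apply Subtype.ext
    show (s, cf s * ((cf s)⁻¹ * z)) = (s, z)
    rw [← mul_assoc, mul_inv_cancel, one_mul]
  · rintro ⟨⟨s, w⟩, _⟩
    apply Subtype.ext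
    show (s, (cf s)⁻¹ * (cf s * w)) = (s, w)
    rw [← mul_assoc, inv_mul_cancel, one_mul]

/-- centralizer of a π-element splits (as a set) as quotient × (centralizer ∩ N) -/
noncomputable def centralizerFiberEquiv
    (hfac : ∀ g : G, IsPiElement π g →
      ∀ x : G, ∃ n ∈ N, ∃ c ∈ Subgroup.centralizer ({g} : Set G), x = n * c)
    (u : G) (hu : IsPiElement π u) :
    {y : G // Commute u y} ≃ (G ⧸ N) × {y : G // y ∈ N ∧ Commute u y} := by
  classical
  set C := Subgroup.centralizer ({u} : Set G) with hC
  have hmemC : ∀ y : G, y ∈ C ↔ Commute u y := by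
    intro y
    rw [hC, Subgroup.mem_centralizer_iff]
    constructor
    · intro h; exact h u rfl
    · intro h g hg
      rw [Set.eq_of_mem_singleton hg]
      exact h
  set ψ : C →* G ⧸ N := (QuotientGroup.mk' N).comp (Subgroup.subtype C) with hψ
  have hψval : ∀ z : C, ψ z = QuotientGroup.mk (z : G) := fun z => rfl
  have hsurj : Function.Surjective ψ := by
    intro q
    obtain ⟨w, rfl⟩ := QuotientGroup.mk_surjective q
    obtain ⟨n, hn, c, hc, hw⟩ := hfac u hu w
    refine ⟨⟨c, hc⟩, ?_⟩
    rw [hψval]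
    show (QuotientGroup.mk c : G ⧸ N) = QuotientGroup.mk w
    rw [hw, QuotientGroup.mk_mul, (QuotientGroup.eq_one_iff n).mpr hn, one_mul]
  have e_a : {y : G // Commute u y} ≃ C :=
    Equiv.subtypeEquiv (Equiv.refl G) (fun y => by
      simp only [Equiv.refl_apply]; exact (hmemC y).symm)
  have e_b : (C : Type _) ≃ (C ⧸ ψ.ker) × ψ.ker := Subgroup.groupEquivQuotientProdSubgroup
  have e_c : (C ⧸ ψ.ker) ≃ G ⧸ N := (QuotientGroup.quotientKerEquivOfSurjective ψ hsurj).toEquiv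
  have e_d : (ψ.ker : Type _) ≃ {y : G // y ∈ N ∧ Commute u y} := by
    refine
      { toFun := fun z => ⟨z.1.1, ?_, (hmemC z.1.1).mp z.1.2⟩
        invFun := fun y => ⟨⟨y.1, (hmemC y.1).mpr y.2.2⟩, ?_⟩
        left_inv := fun z => by ext; rfl
        right_inv := fun y => by ext; rfl }
    · have h1 := z.2
      rw [MonoidHom.mem_ker, hψval] at h1
      exact (QuotientGroup.eq_one_iff _).mp h1
    · rw [MonoidHom.mem_ker, hψval]
      exact (QuotientGroup.eq_one_iff _).mpr y.2.1
  exact e_a.trans (e_b.trans (Equiv.prodCongr e_c e_d))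

theorem count_eq
    (hπ : ∀ p : ℕ, p.Prime → p ∣ N.index → p ∈ π)
    (hfac : ∀ g : G, IsPiElement π g →
      ∀ x : G, ∃ n ∈ N, ∃ c ∈ Subgroup.centralizer ({g} : Set G), x = n * c)
    (hq : ∀ a b : G ⧸ N, a * b = b * a) (x : G) :
    Nat.card {c : ConjClasses G //
        (∀ g ∈ c.carrier, IsPiElement π g) ∧ c.carrier ⊆ {g : G | x⁻¹ * g ∈ N}} =
    Nat.card {c : ConjClasses N // ∀ y ∈ c.carrier, IsPiElement π y} := by
  classical
  -- conjugation invariance of the order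
  have horder : ∀ h u : G, orderOf (h * u * h⁻¹) = orderOf u := by
    intro h u
    simpa [MulAut.conj_apply] using
      orderOf_injective (MulAut.conj h).toMonoidHom (MulAut.conj h).injective u
  have hπconj : ∀ (u h : G), IsPiElement π u → IsPiElement π (h * u * h⁻¹) := by
    intro u h hu p hp hd
    exact hu p hp (by rwa [horder h u] at hd)
  have hmkconj : ∀ (u h : G),
      (QuotientGroup.mk (h * u * h⁻¹) : G ⧸ N) = QuotientGroup.mk u := by
    intro u h
    rw [QuotientGroup.mk_mul, QuotientGroup.mk_mul, QuotientGroup.mk_inv,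
      hq (QuotientGroup.mk h) (QuotientGroup.mk u), mul_inv_cancel_right]
  -- the twisted predicates
  set Φ : G → G → Prop :=
    fun z u => IsPiElement π u ∧ (QuotientGroup.mk u : G ⧸ N) = QuotientGroup.mk z with hΦ
  have hΦconj : ∀ z : G, ∀ g h : G, Φ z g → Φ z (h * g * h⁻¹) := by
    intro z g h hg
    exact ⟨hπconj g h hg.1, by rw [hmkconj g h]; exact hg.2⟩
  -- pair counts for the cosets of x and of 1
  have hTx := pair_card (Φ x) (hΦconj x)
  have hT1 := pair_card (Φ 1) (hΦconj 1)
  -- the pair sets for x and 1 are in bijection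
  have hcardT : Nat.card {p : G × G // Φ x p.1 ∧ Commute p.1 p.2}
      = Nat.card {p : G × G // Φ 1 p.1 ∧ Commute p.1 p.2} := by
    refine Nat.card_congr ?_
    exact (magicEquiv N π hπ x).trans ((translateEquiv N π hfac x).trans
      (magicEquiv N π hπ 1).symm)
  have hG0 : Nat.card G ≠ 0 := Nat.card_pos.ne'
  have hA : Nat.card {c : ConjClasses G // ∀ g ∈ c.carrier, Φ x g}
      = Nat.card {c : ConjClasses G // ∀ g ∈ c.carrier, Φ 1 g} := by
    apply Nat.eq_of_mul_eq_mul_right (Nat.card_pos (α := G))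
    rw [← hTx, ← hT1, hcardT]
  -- now compute the x = 1 side via N
  -- decompose the pair set of the trivial coset
  have hT1N : Nat.card {p : G × G // Φ 1 p.1 ∧ Commute p.1 p.2}
      = Nat.card {q : N × N // IsPiElement π q.1 ∧ Commute q.1 q.2} * Nat.card (G ⧸ N) := by
    have E1' : {p : G × G // Φ 1 p.1 ∧ Commute p.1 p.2}
        ≃ Σ u : {u : G // Φ 1 u}, {y : G // Commute u.1 y} :=
      { toFun := fun p => ⟨⟨p.1.1, p.2.1⟩, ⟨p.1.2, p.2.2⟩⟩
        invFun := fun a => ⟨(a.1.1, a.2.1), a.1.2, a.2.2⟩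
        left_inv := fun p => rfl
        right_inv := fun a => rfl }
    have E2' : (Σ u : {u : G // Φ 1 u}, {y : G // Commute u.1 y})
        ≃ Σ u : {u : G // Φ 1 u}, ((G ⧸ N) × {y : G // y ∈ N ∧ Commute u.1 y}) :=
      Equiv.sigmaCongrRight (fun u => centralizerFiberEquiv N π hfac u.1 u.2.1)
    have E3' : (Σ u : {u : G // Φ 1 u}, ((G ⧸ N) × {y : G // y ∈ N ∧ Commute u.1 y}))
        ≃ (Σ u : {u : G // Φ 1 u}, ({y : G // y ∈ N ∧ Commute u.1 y} × (G ⧸ N))) :=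
      Equiv.sigmaCongrRight (fun u => Equiv.prodComm _ _)
    have E4' : (Σ u : {u : G // Φ 1 u}, ({y : G // y ∈ N ∧ Commute u.1 y} × (G ⧸ N)))
        ≃ (Σ u : {u : G // Φ 1 u}, {y : G // y ∈ N ∧ Commute u.1 y}) × (G ⧸ N) :=
      (Equiv.sigmaProdDistrib _ _).symm
    have hmemN : ∀ u : G, Φ 1 u → u ∈ N := by
      intro u hu
      have h2 := hu.2
      rw [QuotientGroup.mk_one] at h2
      exact (QuotientGroup.eq_one_iff u).mp h2
    have E5' : (Σ u : {u : G // Φ 1 u}, {y : G // y ∈ N ∧ Commute u.1 y})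
        ≃ {q : N × N // IsPiElement π q.1 ∧ Commute q.1 q.2} := by
      refine
        { toFun := fun a => ⟨(⟨a.1.1, hmemN a.1.1 a.1.2⟩, ⟨a.2.1, a.2.2.1⟩), ?_, ?_⟩
          invFun := fun q => ⟨⟨q.1.1.1, ?_, ?_⟩, ⟨q.1.2.1, q.1.2.2, ?_⟩⟩
          left_inv := fun a => rfl
          right_inv := fun q => rfl }
      · intro p hp hd
        rw [Subgroup.orderOf_mk] at hd
        exact a.1.2.1 p hp hd
      · have h3 := a.2.2.2
        exact Subtype.ext h3
      · intro p hp hd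
        rw [Subgroup.orderOf_coe] at hd
        exact q.2.1 p hp hd
      · rw [QuotientGroup.mk_one]
        exact (QuotientGroup.eq_one_iff _).mpr q.1.1.2
      · exact congrArg Subtype.val q.2.2
    have := Nat.card_congr (E1'.trans (E2'.trans (E3'.trans (E4'.trans
      (Equiv.prodCongr E5' (Equiv.refl _))))))
    rw [this, Nat.card_prod]
  -- pair count inside N
  have hordN : ∀ h u : N, orderOf (h * u * h⁻¹) = orderOf u := by
    intro h u
    simpa [MulAut.conj_apply] using
      orderOf_injective (MulAut.conj h).toMonoidHom (MulAut.conj h).injective u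
  have hNP := pair_card (fun u : N => IsPiElement π u)
    (fun g h hg p hp hd => hg p hp (by rwa [hordN h g] at hd))
  -- assemble all the counting identities
  have hGQ : Nat.card G = Nat.card (G ⧸ N) * Nat.card N :=
    Subgroup.card_eq_card_quotient_mul_card_subgroup N
  have hQ0 : 0 < Nat.card (G ⧸ N) := Nat.card_pos
  have hN0 : 0 < Nat.card N := Nat.card_pos
  have hA1N : Nat.card {c : ConjClasses G // ∀ g ∈ c.carrier, Φ 1 g}
      = Nat.card {c : ConjClasses N // ∀ y ∈ c.carrier, IsPiElement π y} := by
    have h6 : Nat.card {c : ConjClasses G // ∀ g ∈ c.carrier, Φ 1 g}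
        * (Nat.card (G ⧸ N) * Nat.card N)
        = Nat.card {c : ConjClasses N // ∀ y ∈ c.carrier, IsPiElement π y}
        * (Nat.card (G ⧸ N) * Nat.card N) := by
      rw [← hGQ]
      rw [← hT1, hT1N, hNP]
      rw [hGQ]
      ring
    exact Nat.eq_of_mul_eq_mul_right (Nat.mul_pos hQ0 hN0) h6
  -- identify the statement's subtype with the Φ x subtype
  have hLHS : Nat.card {c : ConjClasses G //
      (∀ g ∈ c.carrier, IsPiElement π g) ∧ c.carrier ⊆ {g : G | x⁻¹ * g ∈ N}}
      = Nat.card {c : ConjClasses G // ∀ g ∈ c.carrier, Φ x g} := by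
    refine Nat.card_congr (Equiv.subtypeEquivRight ?_)
    intro c
    constructor
    · rintro ⟨h1, h2⟩ g hg
      refine ⟨h1 g hg, ?_⟩
      have h3 : x⁻¹ * g ∈ N := h2 hg
      exact (QuotientGroup.eq.mpr h3).symm
    · intro h
      constructor
      · exact fun g hg => (h g hg).1
      · intro g hg
        show x⁻¹ * g ∈ N
        exact QuotientGroup.eq.mp ((h g hg).2).symm
  rw [hLHS, hA, hA1N]

end Specific

/-- Every coset of a normal subgroup whose index has all its prime divisors in `π`
contains a `π`-element (the `π`-part of any representative). -/
private theorem exists_pi_element_in_coset {G : Type*} [Group G] [Finite G]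
    (N : Subgroup G) [N.Normal]
    (π : Set ℕ) (hπ : ∀ p : ℕ, p.Prime → p ∣ N.index → p ∈ π) (x : G) :
    ∃ s : G, IsPiElement π s ∧ (QuotientGroup.mk s : G ⧸ N) = QuotientGroup.mk x := by
  classical
  set n := orderOf x with hn
  have hn0 : n ≠ 0 := (orderOf_pos x).ne'
  set a : ℕ := ∏ p ∈ n.primeFactors.filter (· ∈ π), p ^ n.factorization p with ha
  set b : ℕ := ∏ p ∈ n.primeFactors.filter (fun p => ¬ p ∈ π), p ^ n.factorization p with hb
  have hab : a * b = n := by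
    rw [ha, hb, Finset.prod_filter_mul_prod_filter_not]
    rw [← Nat.prod_factorization_eq_prod_primeFactors (· ^ ·)]
    exact Nat.factorization_prod_pow_eq_self hn0
  have hprime_a : ∀ p : ℕ, p.Prime → p ∣ a → p ∈ π := by
    intro p hp hpa
    rw [ha] at hpa
    obtain ⟨q, hq, hpq⟩ := (Prime.dvd_finset_prod_iff hp.prime _).mp hpa
    have : p = q := (Nat.prime_dvd_prime_iff_eq hp (Nat.prime_of_mem_primeFactors
      (Finset.mem_filter.mp hq).1)).mp (hp.dvd_of_dvd_pow hpq)
    subst this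
    exact (Finset.mem_filter.mp hq).2
  have hprime_b : ∀ p : ℕ, p.Prime → p ∣ b → p ∉ π := by
    intro p hp hpb
    rw [hb] at hpb
    obtain ⟨q, hq, hpq⟩ := (Prime.dvd_finset_prod_iff hp.prime _).mp hpb
    have : p = q := (Nat.prime_dvd_prime_iff_eq hp (Nat.prime_of_mem_primeFactors
      (Finset.mem_filter.mp hq).1)).mp (hp.dvd_of_dvd_pow hpq)
    subst this
    exact (Finset.mem_filter.mp hq).2
  set m := orderOf (QuotientGroup.mk x : G ⧸ N) with hm
  have hm_pi : ∀ p : ℕ, p.Prime → p ∣ m → p ∈ π := by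
    intro p hp hpm
    refine hπ p hp (hpm.trans ?_)
    rw [Subgroup.index_eq_card]
    exact orderOf_dvd_natCard _
  have hmb : Nat.Coprime m b := by
    by_contra hcop
    obtain ⟨p, hp, hpm, hpb⟩ := Nat.Prime.not_coprime_iff_dvd.mp hcop
    exact hprime_b p hp hpb (hm_pi p hp hpm)
  have hmn : m ∣ n := orderOf_map_dvd (QuotientGroup.mk' N) x
  have hma : m ∣ a := (Nat.Coprime.dvd_of_dvd_mul_right hmb) (by rwa [hab])
  have hcop_ab : Nat.Coprime a b := by
    by_contra hcop
    obtain ⟨p, hp, hpa, hpb⟩ := Nat.Prime.not_coprime_iff_dvd.mp hcop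
    exact hprime_b p hp hpb (hprime_a p hp hpa)
  obtain ⟨u, v, huv⟩ := (Nat.isCoprime_iff_coprime.mpr hcop_ab)
  refine ⟨x ^ (v * (b : ℤ)), ?_, ?_⟩
  · have hord : orderOf (x ^ (v * (b : ℤ))) ∣ a := by
      apply orderOf_dvd_of_pow_eq_one
      have h2 : (x ^ (v * (b:ℤ))) ^ (a:ℕ) = x ^ (v * ((a:ℤ) * (b:ℤ))) := by
        rw [← zpow_natCast (x ^ (v * (b:ℤ))) a, ← zpow_mul]
        ring_nf
      rw [h2]
      have h3 : (a:ℤ) * (b:ℤ) = (n:ℤ) := by exact_mod_cast hab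
      have h4 : x ^ (n:ℤ) = 1 := by
        rw [zpow_natCast, hn, pow_orderOf_eq_one]
      rw [h3, mul_comm, zpow_mul, h4, one_zpow]
    intro p hp hpo
    exact hprime_a p hp (hpo.trans hord)
  · rw [QuotientGroup.mk_zpow]
    set q : G ⧸ N := QuotientGroup.mk x with hq
    have h1 : q ^ (v * (b:ℤ) - 1) = 1 := by
      rw [← orderOf_dvd_iff_zpow_eq_one]
      have h5 : v * (b:ℤ) - 1 = -(u * (a:ℤ)) := by linarith [huv]
      rw [h5]
      refine Dvd.dvd.neg_right ?_
      exact Dvd.dvd.mul_left (Int.natCast_dvd_natCast.mpr hma) u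
    calc q ^ (v * (b:ℤ)) = q ^ (v * (b:ℤ) - 1) * q ^ (1:ℤ) := by
          rw [← zpow_add]; ring_nf
      _ = q := by rw [h1, one_mul, zpow_one]

/-- Corollary 2.4: if `π` contains all prime divisors of `[G:N]` and every
`π`-element `g` of `G` satisfies `G = N ⬝ C_G(g)`, then `G/N` is abelian and
the number of conjugacy classes of `π`-elements of `G` in any coset of `N`
equals `k_π(N)`. -/
theorem stmt_2 {G : Type*} [Group G] [Finite G] (N : Subgroup G) [N.Normal]
    (π : Set ℕ)
    (hπ : ∀ p : ℕ, p.Prime → p ∣ N.index → p ∈ π)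
    (hfac : ∀ g : G, IsPiElement π g →
      ∀ x : G, ∃ n ∈ N, ∃ c ∈ Subgroup.centralizer ({g} : Set G), x = n * c) :
    (∀ x y : G ⧸ N, x * y = y * x) ∧
    ∀ x : G,
      Nat.card {c : ConjClasses G //
          (∀ g ∈ c.carrier, IsPiElement π g) ∧ c.carrier ⊆ {g : G | x⁻¹ * g ∈ N}} =
      Nat.card {c : ConjClasses N // ∀ y ∈ c.carrier, IsPiElement π y} := by
  constructor
  · intro x' y'
    obtain ⟨x, rfl⟩ := QuotientGroup.mk_surjective x'
    obtain ⟨y, rfl⟩ := QuotientGroup.mk_surjective y'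
    obtain ⟨s, hs, hsx⟩ := exists_pi_element_in_coset N π hπ x
    obtain ⟨t, ht, hty⟩ := exists_pi_element_in_coset N π hπ y
    obtain ⟨nn, hnN, c, hc, hEq⟩ := hfac s hs t
    have hsc : s * c = c * s := (Subgroup.mem_centralizer_iff.mp hc) s rfl
    have htc : (QuotientGroup.mk t : G ⧸ N) = QuotientGroup.mk c := by
      rw [hEq, QuotientGroup.mk_mul, (QuotientGroup.eq_one_iff nn).mpr hnN, one_mul]
    rw [← hsx, ← hty, htc, ← QuotientGroup.mk_mul, ← QuotientGroup.mk_mul, hsc]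
  · intro x
    refine count_eq N π hπ hfac ?_ x
    intro x' y'
    obtain ⟨a, rfl⟩ := QuotientGroup.mk_surjective x'
    obtain ⟨b, rfl⟩ := QuotientGroup.mk_surjective y'
    obtain ⟨s, hs, hsx⟩ := exists_pi_element_in_coset N π hπ a
    obtain ⟨t, ht, hty⟩ := exists_pi_element_in_coset N π hπ b
    obtain ⟨nn, hnN, c, hc, hEq⟩ := hfac s hs t
    have hsc : s * c = c * s := (Subgroup.mem_centralizer_iff.mp hc) s rfl
    have htc : (QuotientGroup.mk t : G ⧸ N) = QuotientGroup.mk c := by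
      rw [hEq, QuotientGroup.mk_mul, (QuotientGroup.eq_one_iff nn).mpr hnN, one_mul]
    rw [← hsx, ← hty, htc, ← QuotientGroup.mk_mul, ← QuotientGroup.mk_mul, hsc]
end

section
/- For every natural number m with m ≥ 4, the number of conjugacy classes of the alternating group A_m is strictly less than the number of conjugacy classes of the symmetric group S_m. -/
noncomputable section StmtAux

open Equiv Equiv.Perm Finset

namespace StmtAux

section SwapProd

variable {α : Type*} [DecidableEq α] [Fintype α]

/-- Product of disjoint swaps pairing `s` with `π '' s`. -/
lemma swapProd_spec (π : Equiv.Perm α) (s : Finset α) (hs : ∀ u ∈ s, π u ∉ s) :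
    ∃ P : Equiv.Perm α, Equiv.Perm.sign P = (-1) ^ s.card ∧
      (∀ w ∈ s, P w = π w) ∧ (∀ w ∈ s, P (π w) = w) ∧
      (∀ w, w ∉ s → (∀ u ∈ s, π u ≠ w) → P w = w) := by
  classical
  induction s using Finset.induction with
  | empty => exact ⟨1, by simp, by simp, by simp, by simp⟩
  | @insert a s ha ih =>
    obtain ⟨P, hsgn, h1, h2, h3⟩ := ih (fun u hu => fun hc => hs u (mem_insert_of_mem hu) (mem_insert_of_mem hc))
    have hπa : π a ∉ insert a s := hs a (mem_insert_self a s)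
    refine ⟨Equiv.swap a (π a) * P, ?_, ?_, ?_, ?_⟩
    · have hne : a ≠ π a := fun h => hπa (h ▸ mem_insert_self a s)
      rw [map_mul, sign_swap hne, hsgn, card_insert_of_notMem ha, pow_succ]
      exact (mul_comm _ _)
    · intro w hw
      rcases mem_insert.mp hw with rfl | hw
      · have : P w = w := h3 w ha (fun u hu => fun hc => hπa (by
          exact False.elim (hs u (mem_insert_of_mem hu) (hc ▸ mem_insert_self w s))))
        simp [Equiv.Perm.mul_apply, this, Equiv.swap_apply_left]
      · have hPw : P w = π w := h1 w hw
        have hwa : π w ≠ a := fun h => hs w (mem_insert_of_mem hw) (h ▸ mem_insert_self a s)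
        have hwpa : π w ≠ π a := fun h => ha ((π.injective h) ▸ hw)
        simp [Equiv.Perm.mul_apply, hPw, Equiv.swap_apply_of_ne_of_ne hwa hwpa]
    · intro w hw
      rcases mem_insert.mp hw with rfl | hw
      · have hPa : P (π w) = π w := h3 (π w) (fun hc => hπa (mem_insert_of_mem hc))
          (fun u hu => fun hc => ha ((π.injective hc) ▸ hu))
        simp [Equiv.Perm.mul_apply, hPa, Equiv.swap_apply_right]
      · have hPw : P (π w) = w := h2 w hw
        have hwa : w ≠ a := fun h => ha (h ▸ hw)
        have hwpa : w ≠ π a := fun h => hπa (h ▸ mem_insert_of_mem hw)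
        simp [Equiv.Perm.mul_apply, hPw, Equiv.swap_apply_of_ne_of_ne hwa hwpa]
    · intro w hw hw2
      have hwa : w ≠ a := fun h => hw (h ▸ mem_insert_self a s)
      have hPw : P w = w := h3 w (fun hc => hw (mem_insert_of_mem hc))
        (fun u hu => hw2 u (mem_insert_of_mem hu))
      have hwpa : w ≠ π a := fun h => hw2 a (mem_insert_self a s) h.symm
      simp [Equiv.Perm.mul_apply, hPw, Equiv.swap_apply_of_ne_of_ne hwa hwpa]


lemma odd_commute_of_even_cycle {x : Equiv.Perm α} {n : ℕ} (hn : n ∈ x.cycleType)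
    (he : Even n) : ∃ ρ : Equiv.Perm α, Commute ρ x ∧ Equiv.Perm.sign ρ = -1 := by
  rw [Equiv.Perm.cycleType_def, Multiset.mem_map] at hn
  obtain ⟨c, hc, hcard⟩ := hn
  have hc' : c ∈ x.cycleFactorsFinset := hc
  refine ⟨c, Equiv.Perm.self_mem_cycle_factors_commute hc', ?_⟩
  have hcyc : c.IsCycle := (Equiv.Perm.mem_cycleFactorsFinset_iff.mp hc').1
  rw [hcyc.sign]
  simp only [Function.comp_apply] at hcard
  rw [hcard, he.neg_one_pow]

lemma odd_commute_of_two_fixed {x : Equiv.Perm α} {a b : α} (hab : a ≠ b)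
    (ha : x a = a) (hb : x b = b) :
    ∃ ρ : Equiv.Perm α, Commute ρ x ∧ Equiv.Perm.sign ρ = -1 := by
  refine ⟨Equiv.swap a b, ?_, Equiv.Perm.sign_swap hab⟩
  have : ∀ w, Equiv.swap a b (x w) = x (Equiv.swap a b w) := by
    intro w
    by_cases hwa : w = a
    · subst hwa; rw [ha, Equiv.swap_apply_left, hb]
    by_cases hwb : w = b
    · subst hwb; rw [hb, Equiv.swap_apply_right, ha]
    · have h1 : x w ≠ a := fun h => hwa (x.injective (h.trans ha.symm))
      have h2 : x w ≠ b := fun h => hwb (x.injective (h.trans hb.symm))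
      rw [Equiv.swap_apply_of_ne_of_ne h1 h2, Equiv.swap_apply_of_ne_of_ne hwa hwb]
  ext w
  simpa [Equiv.Perm.mul_apply] using this w


lemma odd_commute_of_repeated_cycle {x : Equiv.Perm α} {n : ℕ}
    (h2 : 2 ≤ x.cycleType.count n) (hodd : Odd n) :
    ∃ ρ : Equiv.Perm α, Commute ρ x ∧ Equiv.Perm.sign ρ = -1 := by
  classical
  -- extract two distinct cycle factors with support card n
  have hcount : x.cycleType.count n =
      (x.cycleFactorsFinset.filter (fun c => n = (Finset.card ∘ Equiv.Perm.support) c)).card := by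
    rw [Equiv.Perm.cycleType_def, Multiset.count_map]
    simp only [Finset.card, Finset.filter_val]
  rw [hcount] at h2
  obtain ⟨c₁, hc₁m, c₂, hc₂m, hne⟩ := Finset.one_lt_card.mp
    (show 1 < (x.cycleFactorsFinset.filter
      (fun c => n = (Finset.card ∘ Equiv.Perm.support) c)).card by omega)
  rw [Finset.mem_filter] at hc₁m hc₂m
  obtain ⟨hc₁, hd₁'⟩ := hc₁m
  have hd₁ := hd₁'.symm
  obtain ⟨hc₂, hd₂'⟩ := hc₂m
  have hd₂ := hd₂'.symm
  simp only [Function.comp_apply] at hd₁ hd₂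
  have hcyc₁ : c₁.IsCycle := (Equiv.Perm.mem_cycleFactorsFinset_iff.mp hc₁).1
  have hcyc₂ : c₂.IsCycle := (Equiv.Perm.mem_cycleFactorsFinset_iff.mp hc₂).1
  have happ₁ : ∀ a ∈ c₁.support, c₁ a = x a := (Equiv.Perm.mem_cycleFactorsFinset_iff.mp hc₁).2
  have happ₂ : ∀ a ∈ c₂.support, c₂ a = x a := (Equiv.Perm.mem_cycleFactorsFinset_iff.mp hc₂).2
  have hdisj : _root_.Disjoint c₁.support c₂.support :=
    Equiv.Perm.Disjoint.disjoint_support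
      (Equiv.Perm.cycleFactorsFinset_pairwise_disjoint x hc₁ hc₂ hne)
  obtain ⟨π, hπ⟩ := isConj_iff.mp (hcyc₁.isConj hcyc₂ (by rw [hd₁, hd₂]))
  -- support of c₂ is the image of support of c₁ under π
  have hsupp : c₂.support = c₁.support.map π.toEmbedding := by
    rw [← hπ, Equiv.Perm.support_conj]
  have hmem : ∀ u ∈ c₁.support, π u ∈ c₂.support := by
    intro u hu; rw [hsupp, Finset.mem_map]; exact ⟨u, hu, rfl⟩
  have hs : ∀ u ∈ c₁.support, π u ∉ c₁.support := fun u hu =>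
    Finset.disjoint_right.mp hdisj (hmem u hu)
  obtain ⟨P, hsgn, h1, h2', h3⟩ := swapProd_spec π c₁.support hs
  have hconj : ∀ v, π (c₁ v) = c₂ (π v) := by
    intro v
    have := hπ
    rw [mul_inv_eq_iff_eq_mul] at this
    calc π (c₁ v) = (π * c₁) v := rfl
    _ = (c₂ * π) v := by rw [this]
    _ = c₂ (π v) := rfl
  refine ⟨P, ?_, by rw [hsgn, hd₁, hodd.neg_one_pow]⟩
  ext w
  show P (x w) = x (P w)
  by_cases hw₁ : w ∈ c₁.support
  · have hxw : x w = c₁ w := (happ₁ w hw₁).symm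
    have hc₁w : c₁ w ∈ c₁.support := Equiv.Perm.apply_mem_support.mpr hw₁
    have hπw : π w ∈ c₂.support := hmem w hw₁
    rw [hxw, h1 _ hc₁w, h1 _ hw₁, ← (happ₂ _ hπw), ← hconj]
  · by_cases hw₂ : w ∈ c₂.support
    · obtain ⟨v, hv, rfl⟩ := Finset.mem_map.mp (hsupp ▸ hw₂)
      simp only [Equiv.toEmbedding_apply] at *
      have hxw : x (π v) = c₂ (π v) := (happ₂ _ hw₂).symm
      have hc₁v : c₁ v ∈ c₁.support := Equiv.Perm.apply_mem_support.mpr hv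
      rw [hxw, ← hconj, h2' _ hc₁v, h2' _ hv]
      exact happ₁ _ hv
    · have hPw : P w = w := h3 w hw₁ (fun u hu => fun hc => hw₂ (hc ▸ hmem u hu))
      have hxw₁ : x w ∉ c₁.support := fun h =>
        hw₁ ((Equiv.Perm.mem_cycleFactorsFinset_support hc₁ w).mp h)
      have hxw₂ : x w ∉ c₂.support := fun h =>
        hw₂ ((Equiv.Perm.mem_cycleFactorsFinset_support hc₂ w).mp h)
      have hPxw : P (x w) = x w := h3 (x w) hxw₁ (fun u hu => fun hc => hxw₂ (hc ▸ hmem u hu))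
      rw [hPw, hPxw]


end SwapProd

variable {m : ℕ}

/-- The partition of `m` associated with a permutation of `Fin m`. -/
def pt (σ : Equiv.Perm (Fin m)) : m.Partition where
  parts := σ.cycleType + Multiset.replicate (m - σ.support.card) 1
  parts_pos := by
    intro a ha
    rcases Multiset.mem_add.mp ha with h | h
    · exact lt_of_lt_of_le (by norm_num) (Equiv.Perm.two_le_of_mem_cycleType h)
    · rw [Multiset.eq_of_mem_replicate h]; norm_num
  parts_sum := by
    have h1 : σ.cycleType.sum = σ.support.card := Equiv.Perm.sum_cycleType σ
    have h2 : σ.support.card ≤ m := by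
      simpa using Finset.card_le_univ σ.support
    rw [Multiset.sum_add, h1, Multiset.sum_replicate, smul_eq_mul, mul_one]
    omega

lemma pt_parts (σ : Equiv.Perm (Fin m)) :
    (pt σ).parts = σ.cycleType + Multiset.replicate (m - σ.support.card) 1 := rfl

lemma isConj_iff_pt_eq {σ τ : Equiv.Perm (Fin m)} : IsConj σ τ ↔ pt σ = pt τ := by
  rw [Equiv.Perm.partition_eq_of_isConj]
  constructor
  · intro h
    have := congrArg Nat.Partition.parts h
    rw [Equiv.Perm.parts_partition, Equiv.Perm.parts_partition, Fintype.card_fin] at this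
    exact Nat.Partition.ext this
  · intro h
    have := congrArg Nat.Partition.parts h
    rw [pt_parts, pt_parts] at this
    apply Nat.Partition.ext
    rw [Equiv.Perm.parts_partition, Equiv.Perm.parts_partition, Fintype.card_fin]
    exact this

lemma pt_surjective : Function.Surjective (pt (m := m)) := by
  intro p
  have hsub : p.parts.filter (fun a => 2 ≤ a) ≤ p.parts := Multiset.filter_le _ _
  have hsum : (p.parts.filter (fun a => 2 ≤ a)).sum ≤ Fintype.card (Fin m) := by
    rw [Fintype.card_fin]
    have hsplit : (p.parts.filter (fun a => 2 ≤ a)).sum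
        + (p.parts.filter (fun a => ¬ 2 ≤ a)).sum = m := by
      rw [← Multiset.sum_add, Multiset.filter_add_not]
      exact p.parts_sum
    omega
  obtain ⟨σ, hσ⟩ := (Equiv.Perm.exists_with_cycleType_iff (Fin m)).mpr
    ⟨hsum, fun a ha => (Multiset.mem_filter.mp ha).2⟩
  refine ⟨σ, Nat.Partition.ext ?_⟩
  rw [pt_parts, hσ]
  have hones : p.parts.filter (fun a => ¬ 2 ≤ a) =
      Multiset.replicate (Multiset.card (p.parts.filter (fun a => ¬ 2 ≤ a))) 1 := by
    rw [Multiset.eq_replicate_card]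
    intro a ha
    have h1 := (Multiset.mem_filter.mp ha).2
    have h2 := p.parts_pos (Multiset.mem_of_mem_filter ha)
    omega
  have hcard : Multiset.card (p.parts.filter (fun a => ¬ 2 ≤ a)) = m - σ.support.card := by
    have hsum2 : σ.support.card = (p.parts.filter (fun a => 2 ≤ a)).sum := by
      rw [← Equiv.Perm.sum_cycleType, hσ]
    have hsplit : (p.parts.filter (fun a => 2 ≤ a)).sum
        + (p.parts.filter (fun a => ¬ 2 ≤ a)).sum = m := by
      rw [← Multiset.sum_add, Multiset.filter_add_not]
      exact p.parts_sum
    have : (p.parts.filter (fun a => ¬ 2 ≤ a)).sum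
        = Multiset.card (p.parts.filter (fun a => ¬ 2 ≤ a)) := by
      conv_lhs => rw [hones]
      rw [Multiset.sum_replicate, smul_eq_mul, mul_one]
    omega
  rw [← hcard, ← hones, Multiset.filter_add_not]

lemma sign_pt (σ : Equiv.Perm (Fin m)) :
    Equiv.Perm.sign σ = (-1) ^ (m + Multiset.card (pt σ).parts) := by
  rw [Equiv.Perm.sign_of_cycleType]
  have hcard : Multiset.card (pt σ).parts
      = Multiset.card σ.cycleType + (m - σ.support.card) := by
    rw [pt_parts, Multiset.card_add, Multiset.card_replicate]
  have hs : σ.support.card ≤ m := by simpa using Finset.card_le_univ σ.support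
  have hsum : σ.cycleType.sum = σ.support.card := Equiv.Perm.sum_cycleType σ
  have hexp : m + Multiset.card (pt σ).parts
      = (σ.cycleType.sum + Multiset.card σ.cycleType) + 2 * (m - σ.support.card) := by
    rw [hcard, hsum]; omega
  rw [hexp]
  conv_rhs => rw [pow_add, pow_mul, neg_one_sq, one_pow, mul_one]


def Dpred (p : m.Partition) : Prop := p.parts.Nodup ∧ ∀ a ∈ p.parts, Odd a

def Opred {m : ℕ} (p : m.Partition) : Prop := Odd (m + Multiset.card p.parts)

instance : DecidablePred (Dpred (m := m)) := fun _ => instDecidableAnd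
instance : DecidablePred (Opred (m := m)) := fun p => inferInstanceAs (Decidable (Odd _))

/-- sum of odd numbers has the parity of the count -/
lemma odd_sum_parity (s : Multiset ℕ) (h : ∀ a ∈ s, Odd a) :
    Even (s.sum + Multiset.card s) := by
  induction s using Multiset.induction_on with
  | empty => simp
  | cons a s ih =>
    have ha : Odd a := h a (Multiset.mem_cons_self a s)
    have hs := ih (fun b hb => h b (Multiset.mem_cons_of_mem hb))
    rw [Multiset.sum_cons, Multiset.card_cons]
    rw [Nat.odd_iff] at ha
    rw [Nat.even_iff] at hs ⊢
    omega

/-- The injection from distinct-odd-parts partitions into odd-class partitions. -/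
noncomputable def phi (p : m.Partition) : m.Partition := by
  classical
  exact if h : ∃ a ∈ p.parts, 3 ≤ a then
    { parts := (p.parts.erase h.choose) + ((h.choose - 1) ::ₘ {1})
      parts_pos := by
        intro a ha
        rcases Multiset.mem_add.mp ha with h' | h'
        · exact p.parts_pos (Multiset.mem_of_mem_erase h')
        · rcases Multiset.mem_cons.mp h' with rfl | h''
          · have := h.choose_spec.2
            omega
          · rw [Multiset.mem_singleton.mp h'']
            norm_num
      parts_sum := by
        have hc3 : 3 ≤ h.choose := h.choose_spec.2
        have hmem : h.choose ∈ p.parts := h.choose_spec.1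
        have hce : h.choose + (p.parts.erase h.choose).sum = p.parts.sum := by
          conv_rhs => rw [← Multiset.cons_erase hmem]
          rw [Multiset.sum_cons]
        have hps := p.parts_sum
        rw [Multiset.sum_add, Multiset.sum_cons, Multiset.sum_singleton]
        omega }
  else p

lemma phi_spec (p : m.Partition) (h : ∃ a ∈ p.parts, 3 ≤ a) :
    ∃ c, c ∈ p.parts ∧ 3 ≤ c ∧
      (phi p).parts = (p.parts.erase c) + ((c - 1) ::ₘ {1}) := by
  refine ⟨h.choose, h.choose_spec.1, h.choose_spec.2, ?_⟩
  rw [phi, dif_pos h]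

lemma D_exists_three (p : m.Partition) (hm : 4 ≤ m) (hD : Dpred p) :
    ∃ a ∈ p.parts, 3 ≤ a := by
  by_contra hc
  push_neg at hc
  have hall : ∀ a ∈ p.parts, a = 1 := by
    intro a ha
    have h1 := p.parts_pos ha
    have h2 := hc a ha
    have h3 := hD.2 a ha
    rw [Nat.odd_iff] at h3
    omega
  have hrep : p.parts = Multiset.replicate (Multiset.card p.parts) 1 :=
    Multiset.eq_replicate_card.mpr hall
  have hnd := hD.1
  have hcard1 : Multiset.card p.parts ≤ 1 := by
    by_contra hgt
    push_neg at hgt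
    have h2 : 2 ≤ Multiset.count 1 p.parts := by
      rw [hrep, Multiset.count_replicate]
      simp
      omega
    have := Multiset.nodup_iff_count_le_one.mp hnd 1
    omega
  have hsum := p.parts_sum
  rw [hrep, Multiset.sum_replicate, smul_eq_mul, mul_one] at hsum
  omega

lemma phi_mem_O (p : m.Partition) (hm : 4 ≤ m) (hD : Dpred p) : Opred (phi p) := by
  obtain ⟨c, hcm, hc3, hparts⟩ := phi_spec p (D_exists_three p hm hD)
  have hcard : Multiset.card (phi p).parts = Multiset.card p.parts + 1 := by
    rw [hparts, Multiset.card_add, Multiset.card_cons, Multiset.card_singleton,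
      Multiset.card_erase_of_mem hcm]
    have hpred : (Multiset.card p.parts).pred = Multiset.card p.parts - 1 := rfl
    rw [hpred]
    have : Multiset.card p.parts ≠ 0 := by
      intro h0
      rw [Multiset.card_eq_zero] at h0
      rw [h0] at hcm
      exact absurd hcm (Multiset.notMem_zero c)
    omega
  have heven : Even (m + Multiset.card p.parts) := by
    have := odd_sum_parity p.parts hD.2
    rwa [p.parts_sum] at this
  unfold Opred
  rw [hcard]
  rw [Nat.even_iff] at heven
  rw [Nat.odd_iff]
  omega

lemma phi_injOn (hm : 4 ≤ m) :
    ∀ p : m.Partition, Dpred p → ∀ q : m.Partition, Dpred q → phi p = phi q → p = q := by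
  intro p hp q hq heq
  obtain ⟨c, hcm, hc3, hcp⟩ := phi_spec p (D_exists_three p hm hp)
  obtain ⟨d, hdm, hd3, hdp⟩ := phi_spec q (D_exists_three q hm hq)
  have hparts : (p.parts.erase c) + ((c - 1) ::ₘ {1}) = (q.parts.erase d) + ((d - 1) ::ₘ {1}) := by
    rw [← hcp, ← hdp, heq]
  have hcodd : Odd c := hp.2 c hcm
  have hdodd : Odd d := hq.2 d hdm
  -- c - 1 is an even member of the common multiset; all members except d-1 are odd
  have hcd : c = d := by
    have hmem : c - 1 ∈ (q.parts.erase d) + ((d - 1) ::ₘ {1}) := by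
      rw [← hparts]
      exact Multiset.mem_add.mpr (Or.inr (Multiset.mem_cons_self _ _))
    have hceven : Even (c - 1) := Nat.Odd.sub_odd hcodd odd_one
    rcases Multiset.mem_add.mp hmem with h' | h'
    · have : Odd (c - 1) := hq.2 _ (Multiset.mem_of_mem_erase h')
      rw [Nat.odd_iff] at this
      rw [Nat.even_iff] at hceven
      omega
    · rcases Multiset.mem_cons.mp h' with h'' | h''
      · omega
      · rw [Multiset.mem_singleton] at h''
        omega
  subst hcd
  have herase : p.parts.erase c = q.parts.erase c := by
    have := hparts
    exact add_right_cancel this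
  apply Nat.Partition.ext
  rw [← Multiset.cons_erase hcm, ← Multiset.cons_erase hdm, herase]


-- the witness partition
def wit (m : ℕ) (hm : 4 ≤ m) : m.Partition :=
  if h : m = 4 then
    { parts := {4}
      parts_pos := by intro a ha; rw [Multiset.mem_singleton.mp ha]; norm_num
      parts_sum := by simp [h] }
  else
    { parts := 2 ::ₘ Multiset.replicate (m - 2) 1
      parts_pos := by
        intro a ha
        rcases Multiset.mem_cons.mp ha with rfl | h'
        · norm_num
        · rw [Multiset.eq_of_mem_replicate h']; norm_num
      parts_sum := by
        rw [Multiset.sum_cons, Multiset.sum_replicate, smul_eq_mul, mul_one]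
        omega }

lemma wit_mem_O (hm : 4 ≤ m) : Opred (wit m hm) := by
  unfold Opred wit
  by_cases h : m = 4
  · rw [dif_pos h]
    subst h
    decide
  · rw [dif_neg h]
    simp only [Multiset.card_cons, Multiset.card_replicate]
    rw [Nat.odd_iff]
    omega

lemma wit_not_image (hm : 4 ≤ m) (p : m.Partition) (hD : Dpred p) :
    phi p ≠ wit m hm := by
  intro heq
  obtain ⟨c, hcm, hc3, hparts⟩ := phi_spec p (D_exists_three p hm hD)
  have hcodd : Odd c := hD.2 c hcm
  have hw : (wit m hm).parts = (p.parts.erase c) + ((c - 1) ::ₘ {1}) := by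
    rw [← heq, hparts]
  by_cases h : m = 4
  · -- wit = {4}, but 1 is a member of the image
    have h1 : (1 : ℕ) ∈ (wit m hm).parts := by
      rw [hw]
      exact Multiset.mem_add.mpr (Or.inr (Multiset.mem_cons.mpr (Or.inr (Multiset.mem_singleton_self 1))))
    unfold wit at h1
    rw [dif_pos h] at h1
    simp at h1
  · -- wit = 2 ::ₘ replicate (m-2) 1
    have hwparts : (wit m hm).parts = 2 ::ₘ Multiset.replicate (m - 2) 1 := by
      unfold wit; rw [dif_neg h]
    -- c - 1 is an even member of wit's parts, so c - 1 = 2, c = 3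
    have hmem : c - 1 ∈ (wit m hm).parts := by
      rw [hw]
      exact Multiset.mem_add.mpr (Or.inr (Multiset.mem_cons_self _ _))
    have hceven : Even (c - 1) := Nat.Odd.sub_odd hcodd odd_one
    have hc1 : c - 1 = 2 := by
      rw [hwparts] at hmem
      rcases Multiset.mem_cons.mp hmem with h' | h'
      · exact h'
      · have := Multiset.eq_of_mem_replicate h'
        rw [Nat.even_iff] at hceven
        omega
    have hc : c = 3 := by omega
    subst hc
    -- count 1 in p.parts.erase 3 is (m - 2) - 1 = m - 3 ≥ 2
    have hcount : Multiset.count 1 ((p.parts.erase 3) + ((3 - 1) ::ₘ {1})) =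
        Multiset.count 1 (2 ::ₘ Multiset.replicate (m - 2) 1) := by
      rw [← hw, hwparts]
    rw [Multiset.count_add, Multiset.count_cons, Multiset.count_singleton,
      Multiset.count_cons, Multiset.count_replicate] at hcount
    simp only [show ((3:ℕ) - 1 = 2) from rfl] at hcount
    norm_num at hcount
    have hle : Multiset.count 1 (p.parts.erase 3) ≤ Multiset.count 1 p.parts :=
      Multiset.count_le_of_le 1 (Multiset.erase_le 3 p.parts)
    have hnd := Multiset.nodup_iff_count_le_one.mp hD.1 1
    omega

lemma D_card_lt_O_card (hm : 4 ≤ m) :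
    (univ.filter (Dpred (m := m))).card < (univ.filter (Opred (m := m))).card := by
  classical
  have himg : (univ.filter (Dpred (m := m))).image phi ⊆ univ.filter (Opred (m := m)) := by
    intro q hq
    rw [Finset.mem_image] at hq
    obtain ⟨p, hp, rfl⟩ := hq
    rw [Finset.mem_filter] at hp ⊢
    exact ⟨Finset.mem_univ _, phi_mem_O p hm hp.2⟩
  have hssub : (univ.filter (Dpred (m := m))).image phi ⊂ univ.filter (Opred (m := m)) := by
    refine Finset.ssubset_iff_of_subset himg |>.mpr ?_
    refine ⟨wit m hm, ?_, ?_⟩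
    · rw [Finset.mem_filter]; exact ⟨Finset.mem_univ _, wit_mem_O hm⟩
    · intro hc
      rw [Finset.mem_image] at hc
      obtain ⟨p, hp, hpe⟩ := hc
      rw [Finset.mem_filter] at hp
      exact wit_not_image hm p hp.2 hpe
  calc (univ.filter (Dpred (m := m))).card
      = ((univ.filter (Dpred (m := m))).image phi).card := by
        rw [Finset.card_image_of_injOn]
        intro p hp q hq
        rw [Finset.mem_coe, Finset.mem_filter] at hp hq
        exact phi_injOn hm p hp.2 q hq.2
    _ < (univ.filter (Opred (m := m))).card := Finset.card_lt_card hssub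


/-- If the partition of `x` does not have distinct odd parts, some odd permutation
commutes with `x`. -/
lemma odd_commute_of_not_D {x : Equiv.Perm (Fin m)} (h : ¬ Dpred (pt x)) :
    ∃ ρ : Equiv.Perm (Fin m), Commute ρ x ∧ Equiv.Perm.sign ρ = -1 := by
  classical
  have heven : (∃ n ∈ x.cycleType, Even n) →
      ∃ ρ : Equiv.Perm (Fin m), Commute ρ x ∧ Equiv.Perm.sign ρ = -1 := by
    rintro ⟨n, hn, he⟩
    exact odd_commute_of_even_cycle hn he
  unfold Dpred at h
  rw [not_and_or] at h
  rcases h with h | h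
  · -- not nodup
    rw [Multiset.nodup_iff_count_le_one] at h
    push_neg at h
    obtain ⟨a, ha⟩ := h
    rw [pt_parts, Multiset.count_add, Multiset.count_replicate] at ha
    by_cases hae : Even a
    · -- a is an even repeated part; a must be in the cycleType
      apply heven
      refine ⟨a, ?_, hae⟩
      have h1 : a ≠ 1 := by rintro rfl; rw [Nat.even_iff] at hae; omega
      rw [if_neg (fun hc => h1 hc.symm)] at ha
      exact Multiset.count_pos.mp (by omega)
    · by_cases ha1 : a = 1
      · -- two fixed points
        subst ha1
        have hct : Multiset.count 1 x.cycleType = 0 := by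
          rw [Multiset.count_eq_zero]
          intro hc
          have := Equiv.Perm.two_le_of_mem_cycleType hc
          omega
        rw [hct, if_pos rfl] at ha
        have hcompl : 2 ≤ x.supportᶜ.card := by
          rw [Finset.card_compl, Fintype.card_fin]
          omega
        obtain ⟨a, hamem, b, hbmem, hab⟩ := Finset.one_lt_card.mp (show 1 < x.supportᶜ.card by omega)
        rw [Finset.mem_compl] at hamem hbmem
        exact odd_commute_of_two_fixed hab
          (Equiv.Perm.notMem_support.mp hamem) (Equiv.Perm.notMem_support.mp hbmem)
      · -- a ≥ 2 odd, repeated in cycleType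
        rw [if_neg (fun hc => ha1 hc.symm)] at ha
        exact odd_commute_of_repeated_cycle (by omega) (Nat.not_even_iff_odd.mp hae)
  · -- some part is even
    push_neg at h
    obtain ⟨n, hn, hne⟩ := h
    apply heven
    rw [pt_parts, Multiset.mem_add] at hn
    rcases hn with hn | hn
    · exact ⟨n, hn, Nat.not_odd_iff_even.mp hne⟩
    · exact absurd (Multiset.eq_of_mem_replicate hn ▸ odd_one) hne

lemma isConjA_of_even {x y : ↥(alternatingGroup (Fin m))} (π : Equiv.Perm (Fin m))
    (hπ : π * ↑x * π⁻¹ = ↑y) (h1 : Equiv.Perm.sign π = 1) : IsConj x y := by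
  refine isConj_iff.mpr ⟨⟨π, Equiv.Perm.mem_alternatingGroup.mpr h1⟩, ?_⟩
  apply Subtype.ext
  simpa using hπ

lemma isConjA_of_comm {x y : ↥(alternatingGroup (Fin m))}
    (h : IsConj (↑x : Equiv.Perm (Fin m)) ↑y)
    (hρ : ∃ ρ : Equiv.Perm (Fin m), Commute ρ (↑x : Equiv.Perm (Fin m)) ∧
      Equiv.Perm.sign ρ = -1) : IsConj x y := by
  obtain ⟨π, hπ⟩ := isConj_iff.mp h
  rcases Int.units_eq_one_or (Equiv.Perm.sign π) with h1 | h1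
  · exact isConjA_of_even π hπ h1
  · obtain ⟨ρ, hcomm, hρs⟩ := hρ
    have hx : ρ * (↑x : Equiv.Perm (Fin m)) * ρ⁻¹ = ↑x := by
      rw [hcomm.eq, mul_inv_cancel_right]
    refine isConjA_of_even (π * ρ) ?_ ?_
    · rw [mul_inv_rev, show π * ρ * ↑x * (ρ⁻¹ * π⁻¹) = π * (ρ * ↑x * ρ⁻¹) * π⁻¹ by group, hx, hπ]
    · rw [map_mul, h1, hρs]; norm_num


-- ============ assembly ============

noncomputable def qS : ConjClasses (Equiv.Perm (Fin m)) → m.Partition :=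
  Quotient.lift pt (fun _ _ h => isConj_iff_pt_eq.mp h)

lemma qS_mk (σ : Equiv.Perm (Fin m)) : qS (ConjClasses.mk σ) = pt σ := rfl

lemma qS_injective : Function.Injective (qS (m := m)) := by
  intro c d h
  obtain ⟨x, rfl⟩ := ConjClasses.exists_rep c
  obtain ⟨y, rfl⟩ := ConjClasses.exists_rep d
  rw [qS_mk, qS_mk] at h
  exact ConjClasses.mk_eq_mk_iff_isConj.mpr (isConj_iff_pt_eq.mpr h)

lemma qS_surjective : Function.Surjective (qS (m := m)) := by
  intro p
  obtain ⟨σ, hσ⟩ := pt_surjective p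
  exact ⟨ConjClasses.mk σ, hσ⟩

noncomputable def qA : ConjClasses ↥(alternatingGroup (Fin m)) →
    ConjClasses (Equiv.Perm (Fin m)) :=
  ConjClasses.map (alternatingGroup (Fin m)).subtype

lemma qA_mk (x : ↥(alternatingGroup (Fin m))) :
    qA (ConjClasses.mk x) = ConjClasses.mk (↑x : Equiv.Perm (Fin m)) := rfl

lemma qA_eq_iff {x y : ↥(alternatingGroup (Fin m))} :
    qA (ConjClasses.mk x) = qA (ConjClasses.mk y) ↔
      IsConj (↑x : Equiv.Perm (Fin m)) ↑y := by
  rw [qA_mk, qA_mk, ConjClasses.mk_eq_mk_iff_isConj]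

noncomputable def sel : ConjClasses (Equiv.Perm (Fin m)) →
    ConjClasses ↥(alternatingGroup (Fin m)) := fun c =>
  if h : ∃ b, qA b = c then h.choose else ConjClasses.mk 1

lemma sel_spec {c : ConjClasses (Equiv.Perm (Fin m))} (h : ∃ b, qA b = c) :
    qA (sel c) = c := by
  rw [sel, dif_pos h]
  exact h.choose_spec

lemma fiber_le_two {a b s : ConjClasses ↥(alternatingGroup (Fin m))}
    (hab : qA a = qA b) (hsa : qA s = qA a) (has : a ≠ s) (hbs : b ≠ s) : a = b := by
  obtain ⟨x, rfl⟩ := ConjClasses.exists_rep a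
  obtain ⟨y, rfl⟩ := ConjClasses.exists_rep b
  obtain ⟨z, rfl⟩ := ConjClasses.exists_rep s
  rw [ConjClasses.mk_eq_mk_iff_isConj]
  obtain ⟨π₂, hπ₂⟩ := isConj_iff.mp (qA_eq_iff.mp hab)
  obtain ⟨π₁, hπ₁⟩ := isConj_iff.mp (qA_eq_iff.mp hsa.symm)
  rcases Int.units_eq_one_or (Equiv.Perm.sign π₂) with h2 | h2
  · exact isConjA_of_even π₂ hπ₂ h2
  rcases Int.units_eq_one_or (Equiv.Perm.sign π₁) with h1 | h1
  · exact absurd (ConjClasses.mk_eq_mk_iff_isConj.mpr (isConjA_of_even π₁ hπ₁ h1)) has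
  exfalso
  apply hbs
  rw [ConjClasses.mk_eq_mk_iff_isConj]
  have hg : (π₂ * π₁⁻¹) * ↑z * (π₂ * π₁⁻¹)⁻¹ = (↑y : Equiv.Perm (Fin m)) := by
    have hx : (↑x : Equiv.Perm (Fin m)) = π₁⁻¹ * ↑z * π₁ := by
      rw [← hπ₁]; group
    rw [mul_inv_rev, inv_inv,
      show π₂ * π₁⁻¹ * ↑z * (π₁ * π₂⁻¹) = π₂ * (π₁⁻¹ * ↑z * π₁) * π₂⁻¹ by group, ← hx, hπ₂]
  exact (isConjA_of_even (π₂ * π₁⁻¹) hg (by rw [map_mul, map_inv, h2, h1]; norm_num)).symm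

open scoped Classical in
noncomputable def psiA (a : ConjClasses ↥(alternatingGroup (Fin m))) : m.Partition × Bool :=
  (qS (qA a), decide (a = sel (qA a)))

lemma psiA_injective : Function.Injective (psiA (m := m)) := by
  intro a b h
  have h1 : qA a = qA b := qS_injective (congrArg Prod.fst h)
  have h2 : (a = sel (qA a)) ↔ (b = sel (qA b)) := by
    have := congrArg Prod.snd h
    simpa using decide_eq_decide.mp this
  by_cases hc : a = sel (qA a)
  · rw [hc, h1, ← h2.mp hc]
  · have hc' : b ≠ sel (qA b) := fun hb => hc (h2.mpr hb)
    rw [← h1] at hc'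
    exact fiber_le_two h1 (sel_spec ⟨a, rfl⟩) hc hc'

lemma psiA_mem (a : ConjClasses ↥(alternatingGroup (Fin m))) :
    psiA a ∈ (univ.filter (fun p => ¬ Opred p)) ×ˢ ({true} : Finset Bool) ∪
      (univ.filter (Dpred (m := m))) ×ˢ ({false} : Finset Bool) := by
  classical
  obtain ⟨x, rfl⟩ := ConjClasses.exists_rep a
  have hfst : (psiA (ConjClasses.mk x)).1 = pt (↑x : Equiv.Perm (Fin m)) := by
    rw [psiA, qA_mk, qS_mk]
  rw [Finset.mem_union, Finset.mem_product, Finset.mem_product]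
  by_cases hc : ConjClasses.mk x = sel (qA (ConjClasses.mk x))
  · left
    constructor
    · rw [hfst, Finset.mem_filter]
      refine ⟨Finset.mem_univ _, ?_⟩
      intro hodd
      have hsgn : Equiv.Perm.sign (↑x : Equiv.Perm (Fin m)) = 1 :=
        Equiv.Perm.mem_alternatingGroup.mp x.2
      rw [sign_pt, Odd.neg_one_pow hodd] at hsgn
      exact (by decide : ¬ ((-1 : ℤˣ) = 1)) hsgn
    · simp only [psiA, Finset.mem_singleton, decide_eq_true_eq]
      exact hc
  · right
    constructor
    · rw [hfst, Finset.mem_filter]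
      refine ⟨Finset.mem_univ _, ?_⟩
      by_contra hD
      apply hc
      set s := sel (qA (ConjClasses.mk x)) with hs
      obtain ⟨z, hz⟩ := ConjClasses.exists_rep s
      have hqa : qA (ConjClasses.mk x) = qA s := (sel_spec ⟨ConjClasses.mk x, rfl⟩).symm
      rw [← hz] at hqa ⊢
      rw [qA_eq_iff] at hqa
      rw [ConjClasses.mk_eq_mk_iff_isConj]
      exact isConjA_of_comm hqa (odd_commute_of_not_D hD)
    · simp only [psiA, Finset.mem_singleton, decide_eq_false_iff_not]
      exact hc



theorem main (hm : 4 ≤ m) :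
    Nat.card (ConjClasses (alternatingGroup (Fin m))) <
      Nat.card (ConjClasses (Equiv.Perm (Fin m))) := by
  classical
  set T : Finset (m.Partition × Bool) :=
    (univ.filter (fun p => ¬ Opred p)) ×ˢ ({true} : Finset Bool) ∪
      (univ.filter (Dpred (m := m))) ×ˢ ({false} : Finset Bool) with hT
  have hkA : Nat.card (ConjClasses ↥(alternatingGroup (Fin m))) ≤ T.card := by
    have := Nat.card_le_card_of_injective
      (fun a : ConjClasses ↥(alternatingGroup (Fin m)) => (⟨psiA a, psiA_mem a⟩ : {v // v ∈ T}))
      (fun a b h => psiA_injective (congrArg Subtype.val h))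
    rwa [Nat.card_eq_fintype_card (α := {v // v ∈ T}), Fintype.card_coe] at this
  have hTcard : T.card ≤ (univ.filter (fun p : m.Partition => ¬ Opred p)).card
      + (univ.filter (Dpred (m := m))).card := by
    refine le_trans (Finset.card_union_le _ _) ?_
    rw [Finset.card_product, Finset.card_product]
    simp
  have hkS : Nat.card (ConjClasses (Equiv.Perm (Fin m))) = Fintype.card (m.Partition) := by
    rw [Nat.card_eq_of_bijective qS ⟨qS_injective, qS_surjective⟩, Nat.card_eq_fintype_card]
  have hsplit : (univ.filter (Opred (m := m))).card
      + (univ.filter (fun p : m.Partition => ¬ Opred p)).card = Fintype.card (m.Partition) := by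
    rw [Finset.card_filter_add_card_filter_not, Finset.card_univ]
  have hDO := D_card_lt_O_card hm
  omega

end StmtAux

end StmtAux

/-- Corollary 2.9: for `m ≥ 4`, `k(A_m) < k(S_m)`. -/
theorem stmt_3 (m : ℕ) (hm : 4 ≤ m) :
    Nat.card (ConjClasses (alternatingGroup (Fin m))) <
      Nat.card (ConjClasses (Equiv.Perm (Fin m))) := by
  exact StmtAux.main hm
end

section
/- Let λ be a partition of a natural number N, with λ'_i = #{j : λ_j ≥ i} the parts of the dual partition and m_i(λ) the number of parts of λ equal to i. Then for every real number q ≥ 2: q^{Σ_i (λ'_i)²} · Π_{i ≥ 1} Π_{j=1}^{m_i(λ)} (1 − q^{−j}) ≥ q^N · (1 − 1/q). -/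
lemma aux_sum_count (N : ℕ) (s : Multiset ℕ) (h : ∀ p ∈ s, p ∈ Finset.Icc 1 N) :
    ∑ i ∈ Finset.Icc 1 N, s.count i = Multiset.card s := by
  induction s using Multiset.induction with
  | empty => simp
  | cons p t ih =>
    have hp := h p (Multiset.mem_cons_self p t)
    have ht : ∀ x ∈ t, x ∈ Finset.Icc 1 N := fun x hx => h x (Multiset.mem_cons_of_mem hx)
    simp only [Multiset.count_cons, Multiset.card_cons, Finset.sum_add_distrib, ih ht]
    rw [Finset.sum_ite_eq' (Finset.Icc 1 N) p (fun _ => 1)]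
    simp [hp]

lemma aux_sum_filter (N : ℕ) (s : Multiset ℕ) (h : ∀ p ∈ s, p ∈ Finset.Icc 1 N) :
    ∑ i ∈ Finset.Icc 1 N, Multiset.card (s.filter fun j => i ≤ j) = s.sum := by
  induction s using Multiset.induction with
  | empty => simp
  | cons p t ih =>
    have hp := h p (Multiset.mem_cons_self p t)
    simp only [Finset.mem_Icc] at hp
    have ht : ∀ x ∈ t, x ∈ Finset.Icc 1 N := fun x hx => h x (Multiset.mem_cons_of_mem hx)
    have hcard : ∀ i : ℕ, Multiset.card (Multiset.filter (fun j => i ≤ j) (p ::ₘ t)) =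
        Multiset.card (Multiset.filter (fun j => i ≤ j) t) + if i ≤ p then 1 else 0 := by
      intro i
      by_cases hip : i ≤ p <;> simp [Multiset.filter_cons, hip]
    simp only [hcard, Finset.sum_add_distrib, ih ht, Multiset.sum_cons]
    have heq : ∑ i ∈ Finset.Icc 1 N, (if i ≤ p then 1 else 0) = p := by
      rw [← Finset.sum_filter]
      have : Finset.filter (fun i => i ≤ p) (Finset.Icc 1 N) = Finset.Icc 1 p := by
        ext x; simp only [Finset.mem_filter, Finset.mem_Icc]; omega
      simp [this]
    omega

/-- Lemma 6.1: for a partition `λ` of `N` and real `q ≥ 2`,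
`q^{∑ (λ'_i)²} ∏_i (1/q)_{m_i(λ)} ≥ q^N (1 - 1/q)`, where `λ'_i` is the number of
parts of `λ` of size at least `i` and `m_i(λ)` is the number of parts of size `i`. -/
theorem stmt_16 (N : ℕ) (lam : Nat.Partition N) (q : ℝ) (hq : 2 ≤ q) :
    q ^ N * (1 - 1 / q) ≤
      q ^ (∑ i ∈ Finset.Icc 1 N, (Multiset.card (lam.parts.filter fun j => i ≤ j)) ^ 2) *
        ∏ i ∈ Finset.Icc 1 N,
          ∏ j ∈ Finset.Icc 1 (Multiset.count i lam.parts), (1 - (q ^ j)⁻¹) := by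
  have hq0 : (0:ℝ) < q := by linarith
  have hq1 : (1:ℝ) ≤ q := by linarith
  have hr0 : (0:ℝ) ≤ 1 - 1/q := by
    rw [sub_nonneg, div_le_one hq0]; linarith
  set s := lam.parts with hs
  have hmem : ∀ p ∈ s, p ∈ Finset.Icc 1 N := by
    intro p hp
    obtain ⟨t, ht⟩ := Multiset.exists_cons_of_mem hp
    have hsum : s.sum = N := lam.parts_sum
    have : p + t.sum = N := by rw [← hsum, ht, Multiset.sum_cons]
    have hpos : 0 < p := lam.parts_pos hp
    simp only [Finset.mem_Icc]; omega
  -- case N = 0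
  rcases Nat.eq_zero_or_pos N with hN | hN
  · subst hN
    simp [Finset.Icc_eq_empty_of_lt]
    nlinarith [one_div_pos.mpr hq0]
  -- N ≥ 1
  have h1mem : (1:ℕ) ∈ Finset.Icc 1 N := by simp only [Finset.mem_Icc]; omega
  have hsum : ∑ i ∈ Finset.Icc 1 N, Multiset.card (s.filter fun j => i ≤ j) = N :=
    by rw [aux_sum_filter N s hmem, lam.parts_sum]
  have hcnt : ∑ i ∈ Finset.Icc 1 N, s.count i = Multiset.card s := aux_sum_count N s hmem
  have hl1 : Multiset.card (s.filter fun j => (1:ℕ) ≤ j) = Multiset.card s := by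
    rw [Multiset.filter_eq_self.mpr]
    intro x hx
    exact lam.parts_pos hx
  -- exponent bound : N + card ≤ S + 1
  have hS : N + Multiset.card s ≤
      (∑ i ∈ Finset.Icc 1 N, (Multiset.card (s.filter fun j => i ≤ j)) ^ 2) + 1 := by
    have h4 : (∑ i ∈ Finset.Icc 1 N, Multiset.card (s.filter fun j => i ≤ j))
          + Multiset.card s
        ≤ (∑ i ∈ Finset.Icc 1 N, (Multiset.card (s.filter fun j => i ≤ j)) ^ 2) + 1 := by
      rw [← Finset.add_sum_erase _ _ h1mem,
        ← Finset.add_sum_erase _ (fun i => (Multiset.card (s.filter fun j => i ≤ j))^2) h1mem]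
      have h2 : ∑ i ∈ (Finset.Icc 1 N).erase 1, Multiset.card (s.filter fun j => i ≤ j) ≤
          ∑ i ∈ (Finset.Icc 1 N).erase 1, (Multiset.card (s.filter fun j => i ≤ j)) ^ 2 :=
        Finset.sum_le_sum (fun i _ => Nat.le_self_pow two_ne_zero _)
      have h3 : Multiset.card s + Multiset.card s ≤ (Multiset.card s) ^ 2 + 1 := by nlinarith
      rw [hl1]
      omega
    omega
  -- product bound
  have hprod : (1 - 1/q) ^ (Multiset.card s) ≤
      ∏ i ∈ Finset.Icc 1 N, ∏ j ∈ Finset.Icc 1 (Multiset.count i s), (1 - (q ^ j)⁻¹) := by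
    calc (1 - 1/q) ^ (Multiset.card s)
        = ∏ i ∈ Finset.Icc 1 N, (1 - 1/q) ^ (Multiset.count i s) := by
          rw [Finset.prod_pow_eq_pow_sum, hcnt]
      _ ≤ _ := by
          apply Finset.prod_le_prod
          · intro i _; positivity
          · intro i _
            have hco : ((1:ℝ) - 1/q) ^ (Multiset.count i s) =
                ∏ j ∈ Finset.Icc 1 (Multiset.count i s), (1 - 1/q) := by
              rw [Finset.prod_const, Nat.card_Icc, Nat.add_sub_cancel]
            rw [hco]
            apply Finset.prod_le_prod
            · intro j _; positivity
            · intro j hj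
              simp only [Finset.mem_Icc] at hj
              have : (q ^ j)⁻¹ ≤ 1/q := by
                rw [one_div]
                apply inv_anti₀ hq0
                calc q = q ^ 1 := (pow_one q).symm
                  _ ≤ q ^ j := pow_le_pow_right₀ hq1 hj.1
              linarith
  -- card ≥ 1
  have hs0 : s ≠ 0 := by
    intro h0
    have hsum0 : s.sum = N := lam.parts_sum
    rw [h0] at hsum0
    simp at hsum0
    omega
  have hk1 : 1 ≤ Multiset.card s := Multiset.card_pos.mpr hs0
  obtain ⟨m, hm⟩ : ∃ m, Multiset.card s = m + 1 := ⟨_, (Nat.succ_pred_eq_of_pos hk1).symm⟩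
  rw [hm] at hprod hS
  have hqS : q ^ (N + m) ≤
      q ^ (∑ i ∈ Finset.Icc 1 N, (Multiset.card (s.filter fun j => i ≤ j)) ^ 2) :=
    pow_le_pow_right₀ hq1 (by omega)
  calc q ^ N * (1 - 1/q) = q ^ N * (1 - 1/q) * 1 := by ring
    _ ≤ q ^ N * (1 - 1/q) * (q * (1 - 1/q)) ^ m := by
        apply mul_le_mul_of_nonneg_left _ (by positivity)
        apply one_le_pow₀
        have : q * (1 - 1/q) = q - 1 := by field_simp
        rw [this]; linarith
    _ = q ^ (N + m) * (1 - 1/q) ^ (m + 1) := by rw [mul_pow, pow_add]; ring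
    _ ≤ q ^ (∑ i ∈ Finset.Icc 1 N, (Multiset.card (s.filter fun j => i ≤ j)) ^ 2)
          * (1 - 1/q) ^ (m + 1) :=
        mul_le_mul_of_nonneg_right hqS (by positivity)
    _ ≤ _ := mul_le_mul_of_nonneg_left hprod (by positivity)
end
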